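/- arXiv:2605.11241 — 6 statements merged into one kernel-verified Lean document; each statement's English description precedes it below -/
import Mathlib

section
/- Let G be a finite simple graph and f : V_G → ℝ a function that is nonzero on at least one vertex of every connected component of G. Then the number of weak nodal domains of f is at most the Urschel number of f (the minimum over all signings of f of the number of strong nodal domains), which in turn is at most the number of strong nodal domains of f. -/
open SimpleGraph

/-- The number of strong nodal domains of `f`: connected components of the subgraph
induced on the positive set plus those of the subgraph induced on the negative set. -/
noncomputable def SND {V : Type*} (G : SimpleGraph V) (f : V → ℝ) : ℕ :=
  Nat.card ((G.induce {v | 0 < f v}).ConnectedComponent) +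
  Nat.card ((G.induce {v | f v < 0}).ConnectedComponent)

/-- The number of weak nodal domains of `f`: connected components of the subgraph
induced on `{f ≥ 0}` (resp. `{f ≤ 0}`) containing at least one vertex where `f ≠ 0`. -/
noncomputable def WND {V : Type*} (G : SimpleGraph V) (f : V → ℝ) : ℕ :=
  Nat.card {c : (G.induce {v | 0 ≤ f v}).ConnectedComponent //
      ∃ v : {v | 0 ≤ f v}, (G.induce {v | 0 ≤ f v}).connectedComponentMk v = c ∧ f v.1 ≠ 0} +
  Nat.card {c : (G.induce {v | f v ≤ 0}).ConnectedComponent //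
      ∃ v : {v | f v ≤ 0}, (G.induce {v | f v ≤ 0}).connectedComponentMk v = c ∧ f v.1 ≠ 0}

/-- `g` is a partial signing of `f`: strictly positive where `f` is positive and strictly
negative where `f` is negative. -/
def IsPartialSigning {V : Type*} (f g : V → ℝ) : Prop :=
  ∀ v, (0 < f v → 0 < g v) ∧ (f v < 0 → g v < 0)

/-- `g` is a signing of `f`: a nowhere-zero partial signing of `f`. -/
def IsSigning {V : Type*} (f g : V → ℝ) : Prop :=
  (∀ v, g v ≠ 0) ∧ IsPartialSigning f g

/-- The Urschel number of `f`: the minimum number of strong nodal domains over all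
signings of `f`. -/
noncomputable def UN {V : Type*} (G : SimpleGraph V) (f : V → ℝ) : ℕ :=
  sInf (SND G '' {g | IsSigning f g})


section Aux

variable {V : Type*}

private instance auxCCFinite [Finite V] (G : SimpleGraph V) : Finite G.ConnectedComponent :=
  Quot.finite _

/-- Inclusion homomorphism between induced subgraphs. -/
private def inclHom (G : SimpleGraph V) {S T : Set V} (hST : S ⊆ T) :
    G.induce S →g G.induce T where
  toFun := fun x => ⟨x.1, hST x.2⟩
  map_rel' := fun hab => hab

private lemma card_cc_le [Finite V] (G : SimpleGraph V) {S T : Set V} (hST : S ⊆ T)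
    (hre : ∀ w : T, ∃ u : S, (G.induce T).Reachable w ⟨u.1, hST u.2⟩) :
    Nat.card (G.induce T).ConnectedComponent ≤ Nat.card (G.induce S).ConnectedComponent := by
  apply Nat.card_le_card_of_surjective (ConnectedComponent.map (inclHom G hST))
  intro c
  induction c using ConnectedComponent.ind with
  | _ w =>
    obtain ⟨u, hu⟩ := hre w
    exact ⟨(G.induce S).connectedComponentMk u,
      (ConnectedComponent.map_mk _ _).trans (ConnectedComponent.sound hu.symm)⟩

private lemma weak_part_le [Finite V] (G : SimpleGraph V) (f : V → ℝ) {S P : Set V}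
    (hPS : P ⊆ S) (hq : ∀ v : V, v ∈ S → f v ≠ 0 → v ∈ P) :
    Nat.card {c : (G.induce S).ConnectedComponent //
      ∃ v : S, (G.induce S).connectedComponentMk v = c ∧ f v.1 ≠ 0} ≤
    Nat.card (G.induce P).ConnectedComponent := by
  classical
  have key : ∀ c : {c : (G.induce S).ConnectedComponent //
      ∃ v : S, (G.induce S).connectedComponentMk v = c ∧ f v.1 ≠ 0},
      ∃ w : P, (G.induce S).connectedComponentMk ⟨w.1, hPS w.2⟩ = c.1 := by
    rintro ⟨c, v, hv, hvne⟩
    exact ⟨⟨v.1, hq v.1 v.2 hvne⟩, by simpa using hv⟩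
  apply Nat.card_le_card_of_injective
    (fun c => (G.induce P).connectedComponentMk (key c).choose)
  intro c d hcd
  have hc := (key c).choose_spec
  have hd := (key d).choose_spec
  have hr : (G.induce P).Reachable (key c).choose (key d).choose :=
    ConnectedComponent.exact hcd
  have hr2 := hr.map (inclHom G hPS)
  apply Subtype.ext
  rw [← hc, ← hd]
  exact ConnectedComponent.sound hr2

private lemma walk_sign {G : SimpleGraph V} (f : V → ℝ) {v u : V} (p : G.Walk v u) :
    f v = 0 → f u ≠ 0 → ∃ a b, G.Adj a b ∧ f a = 0 ∧ f b ≠ 0 := by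
  induction p with
  | nil => intro hv hu; exact absurd hv hu
  | @cons x y z h p ih =>
    intro hv hu
    by_cases hb : f y = 0
    · exact ih hb hu
    · exact ⟨x, y, h, hv, hb⟩

private lemma exists_signing [Fintype V] (G : SimpleGraph V) :
    ∀ (n : ℕ) (f : V → ℝ), (∀ v : V, ∃ u : V, G.Reachable v u ∧ f u ≠ 0) →
      {v | f v = 0}.ncard ≤ n →
      ∃ g, (∀ v, g v ≠ 0) ∧ (∀ v, (0 < f v → 0 < g v) ∧ (f v < 0 → g v < 0)) ∧
        SND G g ≤ SND G f := by
  intro n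
  classical
  induction n with
  | zero =>
    intro f hf hcard
    have hz : {v | f v = 0} = ∅ := by
      rw [← Set.ncard_eq_zero (Set.toFinite _)]; omega
    refine ⟨f, fun v => ?_, fun v => ⟨id, id⟩, le_rfl⟩
    intro h0
    exact absurd hz (by simp [Set.eq_empty_iff_forall_notMem]; exact ⟨v, h0⟩)
  | succ n ih =>
    intro f hf hcard
    by_cases hz : {v | f v = 0} = ∅
    · refine ⟨f, fun v h0 => ?_, fun v => ⟨id, id⟩, le_rfl⟩
      exact absurd hz (by simp [Set.eq_empty_iff_forall_notMem]; exact ⟨v, h0⟩)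
    · obtain ⟨v0, hv0⟩ := Set.nonempty_iff_ne_empty.mpr hz
      obtain ⟨u0, hru, hu0⟩ := hf v0
      obtain ⟨p⟩ := hru
      obtain ⟨a, b, hab, ha, hb⟩ := walk_sign f p hv0 hu0
      set f' : V → ℝ := Function.update f a (f b) with hf'
      have hne : a ≠ b := fun h => hb (h ▸ ha)
      have hfa' : f' a = f b := Function.update_self a (f b) f
      have hfne : ∀ w, w ≠ a → f' w = f w := fun w hw => Function.update_of_ne hw _ _
      have hzset : {v | f' v = 0} = {v | f v = 0} \ {a} := by
        ext w
        by_cases hw : w = a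
        · subst hw; simp [hfa', hb]
        · simp [hfne w hw, hw]
      have hcard' : {v | f' v = 0}.ncard ≤ n := by
        rw [hzset, Set.ncard_diff_singleton_of_mem (show a ∈ {v | f v = 0} from ha)]
        omega
      have hf'h : ∀ v : V, ∃ u : V, G.Reachable v u ∧ f' u ≠ 0 := by
        intro v
        obtain ⟨u, hru, hu⟩ := hf v
        have hua : u ≠ a := fun h => hu (h ▸ ha)
        exact ⟨u, hru, by rw [hfne u hua]; exact hu⟩
      obtain ⟨g, hg1, hg2, hg3⟩ := ih f' hf'h hcard'
      refine ⟨g, hg1, fun v => ⟨fun hv => ?_, fun hv => ?_⟩, le_trans hg3 ?_⟩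
      · have hva : v ≠ a := fun h => by rw [h, ha] at hv; exact lt_irrefl 0 hv
        exact (hg2 v).1 (by rw [hfne v hva]; exact hv)
      · have hva : v ≠ a := fun h => by rw [h, ha] at hv; exact lt_irrefl 0 hv
        exact (hg2 v).2 (by rw [hfne v hva]; exact hv)
      · rcases hb.lt_or_gt with hbneg | hbpos
        · have hposeq : {v | 0 < f' v} = {v | 0 < f v} := by
            ext w
            by_cases hw : w = a
            · subst hw; simp [hfa', ha, not_lt.mpr hbneg.le, lt_irrefl]
            · simp [hfne w hw]
          have hnegle : Nat.card (G.induce {v | f' v < 0}).ConnectedComponent ≤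
              Nat.card (G.induce {v | f v < 0}).ConnectedComponent := by
            have hST : {v | f v < 0} ⊆ {v | f' v < 0} := by
              intro w hw
              have hwa : w ≠ a := by
                rintro rfl; rw [Set.mem_setOf_eq, ha] at hw; exact lt_irrefl 0 hw
              simpa [Set.mem_setOf_eq, hfne w hwa] using hw
            apply card_cc_le G hST
            rintro ⟨w, hw⟩
            by_cases hwa : w = a
            · subst hwa
              refine ⟨⟨b, hbneg⟩, Adj.reachable ?_⟩
              exact hab
            · refine ⟨⟨w, by simpa [Set.mem_setOf_eq, hfne w hwa] using hw⟩, ?_⟩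
              exact Reachable.refl _
          unfold SND
          rw [hposeq]
          exact Nat.add_le_add le_rfl hnegle
        · have hnegeq : {v | f' v < 0} = {v | f v < 0} := by
            ext w
            by_cases hw : w = a
            · subst hw; simp [hfa', ha, not_lt.mpr hbpos.le, lt_irrefl]
            · simp [hfne w hw]
          have hposle : Nat.card (G.induce {v | 0 < f' v}).ConnectedComponent ≤
              Nat.card (G.induce {v | 0 < f v}).ConnectedComponent := by
            have hST : {v | 0 < f v} ⊆ {v | 0 < f' v} := by
              intro w hw
              have hwa : w ≠ a := by
                rintro rfl; rw [Set.mem_setOf_eq, ha] at hw; exact lt_irrefl 0 hw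
              simpa [Set.mem_setOf_eq, hfne w hwa] using hw
            apply card_cc_le G hST
            rintro ⟨w, hw⟩
            by_cases hwa : w = a
            · subst hwa
              refine ⟨⟨b, hbpos⟩, Adj.reachable ?_⟩
              exact hab
            · refine ⟨⟨w, by simpa [Set.mem_setOf_eq, hfne w hwa] using hw⟩, ?_⟩
              exact Reachable.refl _
          unfold SND
          rw [hnegeq]
          exact Nat.add_le_add hposle le_rfl

private lemma wnd_le_snd_signing [Fintype V] (G : SimpleGraph V) (f g : V → ℝ)
    (hg2 : ∀ v, (0 < f v → 0 < g v) ∧ (f v < 0 → g v < 0)) :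
    WND G f ≤ SND G g := by
  unfold WND SND
  refine Nat.add_le_add ?_ ?_
  · apply weak_part_le G f (P := {v | 0 < g v}) (S := {v | 0 ≤ f v})
    · intro v hv
      by_contra hfv
      have : f v < 0 := lt_of_not_ge hfv
      exact absurd hv (not_lt.mpr ((hg2 v).2 this).le)
    · intro v hvS hvne
      exact (hg2 v).1 (lt_of_le_of_ne hvS (Ne.symm hvne))
  · apply weak_part_le G f (P := {v | g v < 0}) (S := {v | f v ≤ 0})
    · intro v hv
      by_contra hfv
      have : 0 < f v := lt_of_not_ge hfv
      exact absurd hv (not_lt.mpr ((hg2 v).1 this).le)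
    · intro v hvS hvne
      exact (hg2 v).2 (lt_of_le_of_ne hvS hvne)

end Aux

/-- If `f` is nonzero somewhere on every connected component of the finite
simple graph `G`, then `WND f ≤ UN f ≤ SND f`. -/
theorem stmt_0 {V : Type*} [Fintype V] (G : SimpleGraph V) (f : V → ℝ)
    (h : ∀ v : V, ∃ u : V, G.Reachable v u ∧ f u ≠ 0) :
    WND G f ≤ UN G f ∧ UN G f ≤ SND G f := by
  obtain ⟨g0, hg01, hg02, hg03⟩ := exists_signing G ({v | f v = 0}.ncard) f h le_rfl
  constructor
  · refine le_csInf ⟨SND G g0, g0, ⟨hg01, hg02⟩, rfl⟩ ?_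
    rintro b ⟨g, ⟨hg1, hg2⟩, rfl⟩
    exact wnd_le_snd_signing G f g hg2
  · exact le_trans (Nat.sInf_le ⟨g0, ⟨hg01, hg02⟩, rfl⟩) hg03
end

section
/- Let G be the star on n vertices with centre c, and let f : V_G → ℝ satisfy f(c) = 0, f nonzero at every leaf, with m₊ leaves where f > 0 and m₋ leaves where f < 0 (m₊ + m₋ = n − 1, both positive). Then the Urschel number of f equals 1 + min(m₊, m₋). -/
open SimpleGraph

/-- The star graph with centre `none` and `m` leaves `some i`. -/
def starGraph (m : ℕ) : SimpleGraph (Option (Fin m)) where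
  Adj u v := (u = none ∨ v = none) ∧ u ≠ v
  symm := ⟨fun u v h => ⟨h.1.symm, h.2.symm⟩⟩
  loopless := ⟨fun u h => h.2 rfl⟩

lemma card_comp_edgeless {V : Type*} (G : SimpleGraph V) (h : ∀ u v, ¬ G.Adj u v) :
    Nat.card G.ConnectedComponent = Nat.card V := by
  symm
  apply Nat.card_eq_of_bijective G.connectedComponentMk
  constructor
  · intro u v huv
    have hr := (SimpleGraph.ConnectedComponent.eq).mp huv
    obtain ⟨w⟩ := hr
    cases w with
    | nil => rfl
    | cons hadj _ => exact absurd hadj (h _ _)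
  · intro c
    exact c.exists_rep

-- connected (preconnected + nonempty) graph has 1 component

lemma card_comp_connected {V : Type*} (G : SimpleGraph V) [Nonempty V]
    (h : G.Preconnected) : Nat.card G.ConnectedComponent = 1 := by
  rw [Nat.card_eq_one_iff_unique]
  constructor
  · constructor
    intro a b
    obtain ⟨u, rfl⟩ := a.exists_rep
    obtain ⟨v, rfl⟩ := b.exists_rep
    exact SimpleGraph.ConnectedComponent.eq.mpr (h u v)
  · exact ⟨G.connectedComponentMk (Classical.arbitrary V)⟩

lemma star_preconnected {m : ℕ} (S : Set (Option (Fin m))) (hS : none ∈ S) :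
    ((_root_.starGraph m).induce S).Preconnected := by
  have key : ∀ w : S, ((_root_.starGraph m).induce S).Reachable w ⟨none, hS⟩ := by
    rintro ⟨w, hw⟩
    match w with
    | none => exact SimpleGraph.Reachable.refl _
    | some i =>
        apply SimpleGraph.Adj.reachable
        show (_root_.starGraph m).Adj (some i) none
        exact ⟨Or.inr rfl, by simp⟩
  intro u v
  exact (key u).trans (key v).symm

lemma card_subtype_opt {m : ℕ} (P : Option (Fin m) → Prop) (h : ¬ P none) :
    Nat.card {v : Option (Fin m) // P v} = Nat.card {i : Fin m // P (some i)} := by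
  apply Nat.card_congr
  exact {
    toFun := fun x => match x with
      | ⟨none, hx⟩ => absurd hx h
      | ⟨some i, hx⟩ => ⟨i, hx⟩
    invFun := fun y => ⟨some y.1, y.2⟩
    left_inv := fun x => match x with
      | ⟨none, hx⟩ => absurd hx h
      | ⟨some i, hx⟩ => rfl
    right_inv := fun y => rfl }

lemma sign_iff {m : ℕ} {f g : Option (Fin m) → ℝ}
    (hl : ∀ i : Fin m, f (some i) ≠ 0) (hg : IsSigning f g) (i : Fin m) :
    (0 < g (some i) ↔ 0 < f (some i)) ∧ (g (some i) < 0 ↔ f (some i) < 0) := by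
  rcases lt_or_gt_of_ne (hl i) with h | h
  · have := (hg.2 (some i)).2 h
    constructor
    · constructor
      · intro hp; linarith
      · intro hp; linarith
    · exact ⟨fun _ => h, fun _ => this⟩
  · have := (hg.2 (some i)).1 h
    constructor
    · exact ⟨fun _ => h, fun _ => this⟩
    · constructor
      · intro hp; linarith
      · intro hp; linarith

lemma SND_signing {m : ℕ} (f g : Option (Fin m) → ℝ)
    (hl : ∀ i : Fin m, f (some i) ≠ 0) (hg : IsSigning f g) :
    SND (_root_.starGraph m) g =
      if 0 < g none then 1 + Nat.card {i : Fin m // f (some i) < 0}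
      else Nat.card {i : Fin m // 0 < f (some i)} + 1 := by
  have hgn := hg.1 none
  unfold SND
  split_ifs with hpos
  · have h1 : Nat.card ((_root_.starGraph m).induce {v | 0 < g v}).ConnectedComponent = 1 := by
      haveI : Nonempty {v : Option (Fin m) | 0 < g v} := ⟨⟨none, hpos⟩⟩
      exact card_comp_connected _ (star_preconnected _ hpos)
    have h2 : Nat.card ((_root_.starGraph m).induce {v | g v < 0}).ConnectedComponent
        = Nat.card {i : Fin m // f (some i) < 0} := by
      rw [card_comp_edgeless]
      · exact (card_subtype_opt (fun v => g v < 0) (by intro h; linarith)).trans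
          (Nat.card_congr (Equiv.subtypeEquivRight fun i => (sign_iff hl hg i).2))
      · rintro ⟨u, hu⟩ ⟨v, hv⟩ hadj
        rcases hadj.1 with h | h
        · subst h; have : g none < 0 := hu; linarith
        · subst h; have : g none < 0 := hv; linarith
    rw [h1, h2]
  · have hneg : g none < 0 := lt_of_le_of_ne (not_lt.mp hpos) hgn
    have h1 : Nat.card ((_root_.starGraph m).induce {v | g v < 0}).ConnectedComponent = 1 := by
      haveI : Nonempty {v : Option (Fin m) | g v < 0} := ⟨⟨none, hneg⟩⟩
      exact card_comp_connected _ (star_preconnected _ hneg)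
    have h2 : Nat.card ((_root_.starGraph m).induce {v | 0 < g v}).ConnectedComponent
        = Nat.card {i : Fin m // 0 < f (some i)} := by
      rw [card_comp_edgeless]
      · exact (card_subtype_opt (fun v => 0 < g v) (by intro h; linarith)).trans
          (Nat.card_congr (Equiv.subtypeEquivRight fun i => (sign_iff hl hg i).1))
      · rintro ⟨u, hu⟩ ⟨v, hv⟩ hadj
        rcases hadj.1 with h | h
        · subst h; have : 0 < g none := hu; linarith
        · subst h; have : 0 < g none := hv; linarith
    rw [h1, h2]

/-- for a function on the star on `n = m + 1` vertices vanishing at the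
centre, nonzero at all leaves, positive at `mp` leaves and negative at `mm` leaves
(both positive, `mp + mm = n - 1`), the Urschel number is `1 + min mp mm`. -/
theorem stmt_3 (n m : ℕ) (hnm : n = m + 1) (hn : 3 ≤ n)
    (f : Option (Fin m) → ℝ) (hc : f none = 0) (hl : ∀ i : Fin m, f (some i) ≠ 0)
    (mp mm : ℕ)
    (hmp : mp = Nat.card {i : Fin m // 0 < f (some i)})
    (hmm : mm = Nat.card {i : Fin m // f (some i) < 0})
    (hmp0 : 0 < mp) (hmm0 : 0 < mm) (hsum : mp + mm = n - 1) :
    UN (_root_.starGraph m) f = 1 + min mp mm := by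
  have hsign : ∀ (a : ℝ), a ≠ 0 → IsSigning f (fun v => if v = none then a else f v) := by
    intro a ha
    constructor
    · intro v
      match v with
      | none => simpa using ha
      | some i => simpa using hl i
    · intro v
      match v with
      | none => simp [hc]
      | some i => simp
  have himg : SND (_root_.starGraph m) '' {g | IsSigning f g} = {1 + mm, mp + 1} := by
    ext k
    simp only [Set.mem_image, Set.mem_setOf_eq, Set.mem_insert_iff, Set.mem_singleton_iff]
    constructor
    · rintro ⟨g, hg, rfl⟩
      rw [SND_signing f g hl hg]
      split_ifs
      · left; rw [hmm]
      · right; rw [hmp]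
    · rintro (rfl | rfl)
      · refine ⟨fun v => if v = none then 1 else f v, hsign 1 one_ne_zero, ?_⟩
        rw [SND_signing f _ hl (hsign 1 one_ne_zero)]
        simp [hmm]
      · refine ⟨fun v => if v = none then -1 else f v, hsign (-1) (by norm_num), ?_⟩
        rw [SND_signing f _ hl (hsign (-1) (by norm_num))]
        simp [hmp]
  rw [UN, himg, csInf_pair]
  omega
end

section
/- Let E ⊂ ℝⁿ be a subspace of dimension m with orthogonal projection P : ℝⁿ → ℝⁿ onto E. Then there exists a diagonal matrix D such that the symmetric operator PDP restricted to E has m distinct nonzero eigenvalues. -/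
open Matrix Finset

section Stmt6Aux

private lemma sum_dot {n : ℕ} {ι : Type*} (s : Finset ι) (f : ι → (Fin n → ℝ)) (y : Fin n → ℝ) :
    (∑ i ∈ s, f i) ⬝ᵥ y = ∑ i ∈ s, f i ⬝ᵥ y := by
  simp only [dotProduct, Finset.sum_apply, Finset.sum_mul]
  exact Finset.sum_comm

private lemma dot_sum {n : ℕ} {ι : Type*} (s : Finset ι) (f : ι → (Fin n → ℝ)) (y : Fin n → ℝ) :
    y ⬝ᵥ (∑ i ∈ s, f i) = ∑ i ∈ s, y ⬝ᵥ f i := by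
  rw [dotProduct_comm, sum_dot]
  exact Finset.sum_congr rfl fun i _ => dotProduct_comm _ _

private lemma sum_mulVec' {n : ℕ} {ι : Type*} (s : Finset ι) (A : ι → Matrix (Fin n) (Fin n) ℝ)
    (x : Fin n → ℝ) : (∑ j ∈ s, A j) *ᵥ x = ∑ j ∈ s, (A j) *ᵥ x := by
  ext i
  simp only [Matrix.mulVec, dotProduct, Matrix.sum_apply, Finset.sum_apply, Finset.sum_mul]
  exact Finset.sum_comm

private lemma vecMulVec_mulVec' {n : ℕ} (w v x : Fin n → ℝ) :
    (vecMulVec w v) *ᵥ x = (v ⬝ᵥ x) • w := by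
  ext i
  simp only [Matrix.mulVec, dotProduct, vecMulVec_apply, Pi.smul_apply, smul_eq_mul,
    Finset.mul_sum]
  rw [Finset.sum_mul]
  exact Finset.sum_congr rfl fun j _ => by ring

private lemma dot_span_zero {n : ℕ} (s : Set (Fin n → ℝ)) (y : Fin n → ℝ)
    (h : ∀ z ∈ s, z ⬝ᵥ y = 0) : ∀ x ∈ Submodule.span ℝ s, x ⬝ᵥ y = 0 := by
  intro x hx
  induction hx using Submodule.span_induction with
  | mem z hz => exact h z hz
  | zero => simp
  | add a b _ _ ha hb => rw [add_dotProduct, ha, hb, add_zero]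
  | smul r a _ ha => rw [smul_dotProduct, ha, smul_zero]

private lemma eq_zero_of_span_dot {n : ℕ} (s : Set (Fin n → ℝ)) (x : Fin n → ℝ)
    (hx : x ∈ Submodule.span ℝ s) (h : ∀ z ∈ s, z ⬝ᵥ x = 0) : x = 0 := by
  have := dot_span_zero s x h x hx
  rwa [dotProduct_self_eq_zero] at this

private lemma card_filter_lt (N a : ℕ) (ha : a ≤ N) :
    (Finset.univ.filter (fun b : Fin N => (b : ℕ) < a)).card = a := by
  have := Finset.card_bij' (s := Finset.univ.filter (fun b : Fin N => (b : ℕ) < a))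
    (t := Finset.range a) (fun b _ => (b : ℕ))
    (fun x hx => (⟨x, lt_of_lt_of_le (Finset.mem_range.mp hx) ha⟩ : Fin N))
    (fun b hb => Finset.mem_range.mpr (Finset.mem_filter.mp hb).2)
    (fun x hx => by simp [Finset.mem_range.mp hx])
    (fun b hb => rfl) (fun x hx => rfl)
  simpa using this

private lemma exists_interleave (K : ℕ) (ν : Fin (K + 1) → ℝ) (hν : StrictAnti ν) :
    ∃ t : Fin (K + 2) → ℝ, StrictAnti t ∧
      ∀ a : Fin (K + 1), t a.succ < ν a ∧ ν a < t a.castSucc := by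
  set t : Fin (K + 2) → ℝ := fun a =>
    if h : (a : ℕ) = 0 then ν 0 + 1
    else if h' : (a : ℕ) ≤ K then (ν ⟨(a : ℕ) - 1, by omega⟩ + ν ⟨(a : ℕ), by omega⟩) / 2
    else ν (Fin.last K) - 1 with ht
  have hpair : ∀ a : Fin (K + 1), t a.succ < ν a ∧ ν a < t a.castSucc := by
    intro a
    constructor
    · show (if h : ((a.succ : Fin (K + 2)) : ℕ) = 0 then _ else _) < ν a
      simp only [Fin.val_succ]
      rw [dif_neg (Nat.succ_ne_zero _)]
      by_cases h' : (a : ℕ) + 1 ≤ K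
      · rw [dif_pos h']
        have h1 : ν ⟨(a : ℕ) + 1 - 1, by omega⟩ = ν a := by congr 1 <;> exact Fin.ext (by simp)
        have h2 : ν ⟨(a : ℕ) + 1, by omega⟩ < ν a := by
          apply hν; rw [Fin.lt_def]; simp
        rw [h1]; linarith
      · rw [dif_neg h']
        have : ν (Fin.last K) ≤ ν a := hν.antitone (Fin.le_last a)
        linarith
    · show ν a < (if h : ((a.castSucc : Fin (K + 2)) : ℕ) = 0 then _ else _)
      simp only [Fin.coe_castSucc]
      by_cases h0 : (a : ℕ) = 0
      · rw [dif_pos h0]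
        have ha0 : a = 0 := Fin.ext h0
        rw [ha0]
        linarith
      · rw [dif_neg h0, dif_pos (by omega : (a : ℕ) ≤ K)]
        have h2 : ν ⟨(a : ℕ), by omega⟩ = ν a := by congr 1
        have h1 : ν a < ν ⟨(a : ℕ) - 1, by omega⟩ := by
          apply hν; rw [Fin.lt_def]; show (a : ℕ) - 1 < (a : ℕ); omega
        rw [h2]; linarith
  refine ⟨t, ?_, hpair⟩
  intro a b hab
  have key : ∀ i : Fin (K + 1), t i.succ < t i.castSucc := fun i =>
    (hpair i).1.trans (hpair i).2
  have : StrictMono (fun a => -(t a)) := by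
    rw [Fin.strictMono_iff_lt_succ]
    intro i
    simp only [neg_lt_neg_iff]
    exact key i
  have := this hab
  simpa using this

private lemma sign_prod (K : ℕ) (ν : Fin (K + 1) → ℝ) (t : Fin (K + 2) → ℝ)
    (ht : StrictAnti t) (hint : ∀ a : Fin (K + 1), t a.succ < ν a ∧ ν a < t a.castSucc)
    (a : Fin (K + 2)) :
    0 < (-1 : ℝ) ^ (a : ℕ) * ∏ b : Fin (K + 1), (t a - ν b) := by
  classical
  set s : Finset (Fin (K + 1)) := Finset.univ.filter (fun b => (b : ℕ) < (a : ℕ)) with hs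
  have hcard : s.card = (a : ℕ) := card_filter_lt (K + 1) a (by omega)
  have hneg : ∀ b ∈ s, 0 < ν b - t a := by
    intro b hb
    have hb' : (b : ℕ) < (a : ℕ) := (Finset.mem_filter.mp hb).2
    have h1 : t a ≤ t b.succ := by
      rcases eq_or_lt_of_le (show (b.succ : Fin (K + 2)) ≤ a by rw [Fin.le_def]; simpa using hb') with h | h
      · rw [h]
      · exact le_of_lt (ht h)
    have := (hint b).1
    linarith
  have hpos : ∀ b ∈ sᶜ, 0 < t a - ν b := by
    intro b hb
    have hb' : ¬ ((b : ℕ) < (a : ℕ)) := by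
      have := Finset.mem_compl.mp hb
      simpa [hs] using this
    have h1 : t b.castSucc ≤ t a := by
      rcases eq_or_lt_of_le (show a ≤ (b.castSucc : Fin (K + 2)) by rw [Fin.le_def]; simpa using le_of_not_gt hb') with h | h
      · rw [← h]
      · exact le_of_lt (ht h)
    have := (hint b).2
    linarith
  have hsplit : (∏ b : Fin (K + 1), (t a - ν b)) =
      (∏ b ∈ s, (t a - ν b)) * ∏ b ∈ sᶜ, (t a - ν b) :=
    (Finset.prod_mul_prod_compl s _).symm
  have hprod_s : (∏ b ∈ s, (t a - ν b)) = (-1 : ℝ) ^ (a : ℕ) * ∏ b ∈ s, (ν b - t a) := by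
    rw [← hcard]
    rw [← Finset.prod_const (-1 : ℝ), ← Finset.prod_mul_distrib]
    exact Finset.prod_congr rfl fun b _ => by ring
  rw [hsplit, hprod_s]
  have h1 : 0 < ∏ b ∈ s, (ν b - t a) := Finset.prod_pos hneg
  have h2 : 0 < ∏ b ∈ sᶜ, (t a - ν b) := Finset.prod_pos hpos
  have h3 : ((-1 : ℝ) ^ (a : ℕ)) * ((-1 : ℝ) ^ (a : ℕ)) = 1 := by
    rw [← pow_add]
    exact Even.neg_one_pow ⟨(a : ℕ), rfl⟩
  calc (0:ℝ) < (((-1 : ℝ) ^ (a : ℕ)) * ((-1 : ℝ) ^ (a : ℕ))) * ((∏ b ∈ s, (ν b - t a)) * ∏ b ∈ sᶜ, (t a - ν b)) := by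
        rw [h3, one_mul]; exact mul_pos h1 h2
    _ = (-1 : ℝ) ^ (a : ℕ) * ((-1 : ℝ) ^ (a : ℕ) * (∏ b ∈ s, (ν b - t a)) * ∏ b ∈ sᶜ, (t a - ν b)) := by ring


private lemma dot_self_nonneg' {n : ℕ} (z : Fin n → ℝ) : 0 ≤ z ⬝ᵥ z := by
  rw [dotProduct]; exact Finset.sum_nonneg fun i _ => mul_self_nonneg _

private lemma dot_self_pos' {n : ℕ} {z : Fin n → ℝ} (hz : z ≠ 0) : 0 < z ⬝ᵥ z := by
  rcases (dot_self_nonneg' z).lt_or_eq with h | h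
  · exact h
  · exact absurd (dotProduct_self_eq_zero.mp h.symm) hz

private lemma mulVec_lincomb {n N : ℕ} (M : Matrix (Fin n) (Fin n) ℝ) (g : Fin N → ℝ)
    (f : Fin N → (Fin n → ℝ)) : M *ᵥ (∑ b, g b • f b) = ∑ b, g b • (M *ᵥ f b) := by
  rw [← Matrix.mulVecLin_apply, map_sum]
  refine Finset.sum_congr rfl fun b _ => ?_
  rw [LinearMap.map_smul, Matrix.mulVecLin_apply]

private lemma key {n m : ℕ} (u : Fin m → (Fin n → ℝ)) (hu : LinearIndependent ℝ u) :
    ∀ k : ℕ, k ≤ m → ∃ (c : Fin m → ℝ) (μ : Fin k → ℝ) (v : Fin k → (Fin n → ℝ)),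
      (∀ j : Fin m, (j : ℕ) < k → 0 < c j) ∧ (∀ j : Fin m, k ≤ (j : ℕ) → c j = 0) ∧
      StrictAnti μ ∧ (∀ i, 0 < μ i) ∧
      (∀ i j, v i ⬝ᵥ v j = if i = j then 1 else 0) ∧
      Submodule.span ℝ (Set.range v) = Submodule.span ℝ (u '' {j : Fin m | (j : ℕ) < k}) ∧
      (∀ i, (∑ j, c j • vecMulVec (u j) (u j)) *ᵥ (v i) = μ i • v i) := by
  intro k
  induction k with
  | zero =>
    intro _
    refine ⟨0, Fin.elim0, Fin.elim0, ?_, ?_, ?_, ?_, ?_, ?_, ?_⟩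
    · intro j hj; omega
    · intro j _; rfl
    · intro a; exact a.elim0
    · intro i; exact i.elim0
    · intro i; exact i.elim0
    · have h1 : Set.range (Fin.elim0 : Fin 0 → (Fin n → ℝ)) = ∅ := Set.range_eq_empty _
      have h2 : {j : Fin m | (j : ℕ) < 0} = ∅ := by ext j; simp
      rw [h1, h2, Set.image_empty]
    · intro i; exact i.elim0
  | succ k ih =>
    intro hk1
    have hkm : k < m := hk1
    obtain ⟨c, μ, v, hcpos, hczero, hμa, hμpos, hvon, hvspan, heig⟩ := ih (Nat.le_of_lt hkm)
    set u0 : Fin n → ℝ := u ⟨k, hkm⟩ with hu0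
    set M : Matrix (Fin n) (Fin n) ℝ := ∑ j, c j • vecMulVec (u j) (u j) with hM
    -- basic formulas
    have hMmul : ∀ x : Fin n → ℝ, M *ᵥ x = ∑ j, (c j * (u j ⬝ᵥ x)) • u j := by
      intro x
      rw [hM, sum_mulVec']
      refine Finset.sum_congr rfl fun j _ => ?_
      rw [Matrix.smul_mulVec, vecMulVec_mulVec', smul_smul]
    have hMdot : ∀ x y : Fin n → ℝ, x ⬝ᵥ (M *ᵥ y) = ∑ j, c j * (u j ⬝ᵥ x) * (u j ⬝ᵥ y) := by
      intro x y
      rw [hMmul, dot_sum]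
      refine Finset.sum_congr rfl fun j _ => ?_
      rw [dotProduct_smul, smul_eq_mul, dotProduct_comm x (u j)]
      ring
    -- Gram-Schmidt
    set w : Fin n → ℝ := u0 - ∑ i, (u0 ⬝ᵥ v i) • v i with hw
    have hwv : ∀ i, v i ⬝ᵥ w = 0 := by
      intro i
      rw [hw, dotProduct_sub, dot_sum]
      have : ∀ j, v i ⬝ᵥ ((u0 ⬝ᵥ v j) • v j) = (u0 ⬝ᵥ v j) * (if i = j then 1 else 0) := by
        intro j; rw [dotProduct_smul, smul_eq_mul, hvon i j]
      rw [Finset.sum_congr rfl fun j _ => this j]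
      rw [dotProduct_comm]
      simp
    have hspanv_le : ∀ i : Fin k, v i ∈ Submodule.span ℝ (u '' {j : Fin m | (j : ℕ) < k}) := by
      intro i
      rw [← hvspan]
      exact Submodule.subset_span (Set.mem_range_self i)
    have hwne : w ≠ 0 := by
      intro h0
      have h0' : u0 - ∑ i, (u0 ⬝ᵥ v i) • v i = 0 := by rw [← hw]; exact h0
      have hsum : u0 = ∑ i, (u0 ⬝ᵥ v i) • v i := sub_eq_zero.mp h0'
      have hu0mem : u0 ∈ Submodule.span ℝ (u '' {j : Fin m | (j : ℕ) < k}) := by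
        rw [hsum]
        exact Submodule.sum_mem _ fun i _ => Submodule.smul_mem _ _ (hspanv_le i)
      exact (hu.notMem_span_image (by simp : (⟨k, hkm⟩ : Fin m) ∉ {j : Fin m | (j : ℕ) < k})) hu0mem
        -- the unit vector completing v to an orthonormal basis of V_{k+1}
    have hwpos : 0 < w ⬝ᵥ w := dot_self_pos' hwne
    set sw : ℝ := Real.sqrt (w ⬝ᵥ w) with hsw
    have hswpos : 0 < sw := Real.sqrt_pos.mpr hwpos
    have hss : sw * sw = w ⬝ᵥ w := Real.mul_self_sqrt (le_of_lt hwpos)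
    set what : Fin n → ℝ := sw⁻¹ • w with hwhat
    have hwhatv : ∀ i, v i ⬝ᵥ what = 0 := by
      intro i; rw [hwhat, dotProduct_smul, hwv i, smul_zero]
    have hwhatself : what ⬝ᵥ what = 1 := by
      rw [hwhat, dotProduct_smul, smul_dotProduct, smul_eq_mul, smul_eq_mul]
      field_simp
      linarith [hss]
    set e' : Fin (k+1) → (Fin n → ℝ) := fun a => if h : (a : ℕ) < k then v ⟨a, h⟩ else what with he'
    have he'on : ∀ a b, e' a ⬝ᵥ e' b = if a = b then 1 else 0 := by
      intro a b
      simp only [he']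
      by_cases ha : (a : ℕ) < k <;> by_cases hb : (b : ℕ) < k
      · rw [dif_pos ha, dif_pos hb, hvon]
        by_cases hab : a = b
        · subst hab; simp
        · have hne : (⟨(a : ℕ), ha⟩ : Fin k) ≠ ⟨(b : ℕ), hb⟩ :=
            fun h => hab (Fin.ext (by simpa using h))
          simp [hab, hne]
      · rw [dif_pos ha, dif_neg hb, hwhatv,
          if_neg (show ¬ a = b from fun h => hb (h ▸ ha))]
      · rw [dif_neg ha, dif_pos hb, dotProduct_comm, hwhatv,
          if_neg (show ¬ a = b from fun h => ha (h.symm ▸ hb))]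
      · have hab : a = b := Fin.ext (by omega)
        rw [dif_neg ha, dif_neg hb, hwhatself, if_pos hab]
    set ν : Fin (k+1) → ℝ := fun a => if h : (a : ℕ) < k then μ ⟨a, h⟩ else 0 with hν
    have hνanti : StrictAnti ν := by
      intro a b hab
      have hab' : (a : ℕ) < (b : ℕ) := hab
      simp only [hν]
      by_cases hb : (b : ℕ) < k
      · rw [dif_pos hb, dif_pos (lt_trans hab' hb)]
        exact hμa (show (⟨(a : ℕ), lt_trans hab' hb⟩ : Fin k) < ⟨(b : ℕ), hb⟩ from hab')
      · rw [dif_neg hb, dif_pos (by omega : (a : ℕ) < k)]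
        exact hμpos _
    have hMwhat : M *ᵥ what = 0 := by
      rw [hMmul]
      apply Finset.sum_eq_zero
      intro j _
      by_cases hj : (j : ℕ) < k
      · have hju : u j ∈ Submodule.span ℝ (Set.range v) := by
          rw [hvspan]; exact Submodule.subset_span ⟨j, hj, rfl⟩
        have hz : u j ⬝ᵥ what = 0 :=
          dot_span_zero (Set.range v) what (by rintro z ⟨i, rfl⟩; exact hwhatv i) (u j) hju
        rw [hz, mul_zero, zero_smul]
      · rw [hczero j (le_of_not_gt hj), zero_mul, zero_smul]
    have he'eig : ∀ a, M *ᵥ e' a = ν a • e' a := by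
      intro a
      simp only [he', hν]
      by_cases ha : (a : ℕ) < k
      · rw [dif_pos ha, dif_pos ha]; exact heig _
      · rw [dif_neg ha, dif_neg ha, hMwhat, zero_smul]
    set bb : Fin (k+1) → ℝ := fun a => u0 ⬝ᵥ e' a with hbb
    set Q0 : Matrix (Fin n) (Fin n) ℝ := vecMulVec u0 u0 with hQ0
    set Bmat : ℝ → Matrix (Fin (k+1)) (Fin (k+1)) ℝ :=
      fun ε => Matrix.diagonal ν + ε • vecMulVec bb bb with hBmat
    have hBdot : ∀ (ε : ℝ) (a b : Fin (k+1)), Bmat ε a b = e' a ⬝ᵥ ((M + ε • Q0) *ᵥ e' b) := by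
      intro ε a b
      rw [Matrix.add_mulVec, dotProduct_add]
      have h1 : e' a ⬝ᵥ (M *ᵥ e' b) = Matrix.diagonal ν a b := by
        rw [he'eig b, dotProduct_smul, he'on, Matrix.diagonal_apply]
        by_cases hab : a = b
        · rw [if_pos hab, if_pos hab, smul_eq_mul, mul_one, hab]
        · rw [if_neg hab, if_neg hab, smul_eq_mul, mul_zero]
      have h2 : e' a ⬝ᵥ ((ε • Q0) *ᵥ e' b) = ε * (bb a * bb b) := by
        rw [Matrix.smul_mulVec, dotProduct_smul, hQ0, vecMulVec_mulVec',
          dotProduct_smul, smul_eq_mul, smul_eq_mul, hbb]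
        rw [dotProduct_comm (e' a) u0]
        ring
      rw [h1, h2]
      simp only [hBmat, Matrix.add_apply, Matrix.smul_apply, vecMulVec_apply, smul_eq_mul]
    set p : ℝ → ℝ → ℝ :=
      fun ε s => ((s • (1 : Matrix (Fin (k+1)) (Fin (k+1)) ℝ)) - Bmat ε).det with hp
    have hp0 : ∀ s, p 0 s = ∏ b, (s - ν b) := by
      intro s
      simp only [hp]
      have hdiag : (s • (1 : Matrix (Fin (k+1)) (Fin (k+1)) ℝ)) - Bmat 0
          = Matrix.diagonal (fun b => s - ν b) := by
        simp only [hBmat]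
        ext a b
        by_cases hab : a = b
        · simp [hab, Matrix.diagonal_apply, Matrix.one_apply]
        · simp [hab, Matrix.diagonal_apply, Matrix.one_apply]
      rw [hdiag, Matrix.det_diagonal]
    have hpcont : ∀ s : ℝ, Continuous fun ε => p ε s := by
      intro s
      simp only [hp]
      apply Continuous.matrix_det
      apply continuous_matrix
      intro i j
      simp only [Matrix.sub_apply, Matrix.smul_apply, Matrix.add_apply, hBmat, vecMulVec_apply,
        smul_eq_mul]
      fun_prop
    have hpconts : ∀ ε : ℝ, Continuous fun s => p ε s := by
      intro ε
      simp only [hp]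
      apply Continuous.matrix_det
      apply continuous_matrix
      intro i j
      simp only [Matrix.sub_apply, Matrix.smul_apply]
      fun_prop
    obtain ⟨t, ht, hint⟩ := exists_interleave k ν hνanti
    have hsign0 : ∀ a : Fin (k+2), 0 < (-1 : ℝ) ^ (a : ℕ) * p 0 (t a) := by
      intro a; rw [hp0]; exact sign_prod k ν t ht hint a
    have hev : ∀ᶠ ε in nhds (0 : ℝ), ∀ a : Fin (k+2), 0 < (-1 : ℝ) ^ (a : ℕ) * p ε (t a) := by
      rw [Filter.eventually_all]
      intro a
      have hc : Continuous fun ε => (-1 : ℝ) ^ (a : ℕ) * p ε (t a) :=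
        continuous_const.mul (hpcont (t a))
      have hmem : (0 : ℝ) ∈ (fun ε => (-1 : ℝ) ^ (a : ℕ) * p ε (t a)) ⁻¹' Set.Ioi 0 :=
        hsign0 a
      exact (isOpen_Ioi.preimage hc).mem_nhds hmem
    have hev' : ∀ᶠ ε in nhdsWithin (0 : ℝ) (Set.Ioi 0),
        (∀ a : Fin (k+2), 0 < (-1 : ℝ) ^ (a : ℕ) * p ε (t a)) ∧ ε ∈ Set.Ioi (0 : ℝ) :=
      Filter.Eventually.and (nhdsWithin_le_nhds hev) eventually_mem_nhdsWithin
    obtain ⟨ε, hεsign, hεmem⟩ := hev'.exists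
    have hεpos : 0 < ε := hεmem
    -- find the k+1 roots
    have hroot : ∀ a : Fin (k+1), ∃ s, s ∈ Set.Ioo (t a.succ) (t a.castSucc) ∧ p ε s = 0 := by
      intro a
      have hle : t a.succ ≤ t a.castSucc := le_of_lt (ht (Fin.castSucc_lt_succ (i := a)))
      have hglo : (-1 : ℝ) ^ (a : ℕ) * p ε (t a.succ) < 0 := by
        have h := hεsign a.succ
        rw [Fin.val_succ, pow_succ] at h
        nlinarith [h]
      have hghi : 0 < (-1 : ℝ) ^ (a : ℕ) * p ε (t a.castSucc) := by
        have h := hεsign a.castSucc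
        rwa [Fin.coe_castSucc] at h
      have hgc : ContinuousOn (fun s => (-1 : ℝ) ^ (a : ℕ) * p ε s)
          (Set.Icc (t a.succ) (t a.castSucc)) :=
        (continuous_const.mul (hpconts ε)).continuousOn
      obtain ⟨s, hs, hgs⟩ := intermediate_value_Ioo hle hgc ⟨hglo, hghi⟩
      refine ⟨s, hs, ?_⟩
      have hne : ((-1 : ℝ) ^ (a : ℕ)) ≠ 0 := pow_ne_zero _ (by norm_num)
      rcases mul_eq_zero.mp hgs with h | h
      · exact absurd h hne
      · exact h
    choose lam hlam1 hlam2 using hroot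
    have hlamanti : StrictAnti lam := by
      intro a b hab
      have h1 : lam b < t b.castSucc := (hlam1 b).2
      have h2 : t a.succ < lam a := (hlam1 a).1
      have h3 : t b.castSucc ≤ t a.succ := by
        have hle : (a.succ : Fin (k+2)) ≤ b.castSucc := by
          rw [Fin.le_def, Fin.val_succ, Fin.coe_castSucc]
          exact hab
        rcases eq_or_lt_of_le hle with h | h
        · rw [← h]
        · exact le_of_lt (ht h)
      linarith
    -- eigenvectors of B
    have hy : ∀ a : Fin (k+1), ∃ y : Fin (k+1) → ℝ, y ≠ 0 ∧ Bmat ε *ᵥ y = lam a • y := by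
      intro a
      have hdet : (lam a • (1 : Matrix (Fin (k+1)) (Fin (k+1)) ℝ) - Bmat ε).det = 0 := hlam2 a
      obtain ⟨y, hy0, hyz⟩ := (Matrix.exists_mulVec_eq_zero_iff).mpr hdet
      refine ⟨y, hy0, ?_⟩
      rw [Matrix.sub_mulVec, Matrix.smul_mulVec, Matrix.one_mulVec] at hyz
      exact (sub_eq_zero.mp hyz).symm
    choose yv hyne hyeig using hy
    -- the new coefficient vector and matrix
    set c' : Fin m → ℝ := fun j => if (j : ℕ) = k then ε else c j with hc'
    set M' : Matrix (Fin n) (Fin n) ℝ := M + ε • Q0 with hM'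
    have hM'sum : M' = ∑ j, c' j • vecMulVec (u j) (u j) := by
      rw [hM', hM]
      have hsplit : ∀ j : Fin m, c' j • vecMulVec (u j) (u j)
          = c j • vecMulVec (u j) (u j)
            + (if j = (⟨k, hkm⟩ : Fin m) then ε • vecMulVec u0 u0 else 0) := by
        intro j
        simp only [hc']
        by_cases hj : (j : ℕ) = k
        · have hj' : j = (⟨k, hkm⟩ : Fin m) := Fin.ext hj
          rw [if_pos hj, if_pos hj', hczero j (le_of_eq hj.symm), zero_smul, zero_add, hj', hu0]
        · rw [if_neg hj, if_neg (fun h => hj (by rw [h])), add_zero]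
      rw [Finset.sum_congr rfl fun j _ => hsplit j, Finset.sum_add_distrib,
        Finset.sum_ite_eq' Finset.univ ((⟨k, hkm⟩ : Fin m)), if_pos (Finset.mem_univ _), hQ0]
    have hM'mul : ∀ x, M' *ᵥ x = ∑ j, (c' j * (u j ⬝ᵥ x)) • u j := by
      intro x
      rw [hM'sum, sum_mulVec']
      refine Finset.sum_congr rfl fun j _ => ?_
      rw [Matrix.smul_mulVec, vecMulVec_mulVec', smul_smul]
    have hM'dot : ∀ x y, x ⬝ᵥ (M' *ᵥ y) = ∑ j, c' j * (u j ⬝ᵥ x) * (u j ⬝ᵥ y) := by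
      intro x y
      rw [hM'mul, dot_sum]
      refine Finset.sum_congr rfl fun j _ => ?_
      rw [dotProduct_smul, smul_eq_mul, dotProduct_comm x (u j)]
      ring
    have hc'pos : ∀ j : Fin m, (j : ℕ) < k + 1 → 0 < c' j := by
      intro j hj
      simp only [hc']
      by_cases hjk : (j : ℕ) = k
      · rw [if_pos hjk]; exact hεpos
      · rw [if_neg hjk]; exact hcpos j (by omega)
    have hc'zero : ∀ j : Fin m, k + 1 ≤ (j : ℕ) → c' j = 0 := by
      intro j hj
      simp only [hc']
      rw [if_neg (by omega)]
      exact hczero j (by omega)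
    have hc'nonneg : ∀ j, 0 ≤ c' j := by
      intro j
      by_cases hj : (j : ℕ) < k + 1
      · exact le_of_lt (hc'pos j hj)
      · exact le_of_eq (hc'zero j (le_of_not_gt hj)).symm
    -- span facts
    have hspan_mono : Submodule.span ℝ (u '' {j : Fin m | (j : ℕ) < k})
        ≤ Submodule.span ℝ (u '' {j : Fin m | (j : ℕ) < k + 1}) :=
      Submodule.span_mono (Set.image_mono (f := u) (fun j hj => Nat.lt_succ_of_lt hj))
    have hvLEe' : Submodule.span ℝ (Set.range v) ≤ Submodule.span ℝ (Set.range e') := by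
      rw [Submodule.span_le]
      rintro z ⟨i, rfl⟩
      have hei : e' (⟨(i : ℕ), by omega⟩ : Fin (k+1)) = v i := by
        simp only [he']
        rw [dif_pos i.isLt]
      exact hei ▸ Submodule.subset_span ⟨_, rfl⟩
    have hwhatrange : what ∈ Set.range e' := ⟨Fin.last k, by simp only [he']; rw [dif_neg (by simp)]⟩
    have hspanE : Submodule.span ℝ (Set.range e')
        = Submodule.span ℝ (u '' {j : Fin m | (j : ℕ) < k + 1}) := by
      apply le_antisymm
      · rw [Submodule.span_le]
        rintro z ⟨a, rfl⟩
        by_cases ha : (a : ℕ) < k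
        · have hea : e' a = v ⟨(a : ℕ), ha⟩ := by simp only [he']; rw [dif_pos ha]
          rw [hea]
          exact hspan_mono (hspanv_le ⟨(a : ℕ), ha⟩)
        · have hea : e' a = what := by simp only [he']; rw [dif_neg ha]
          rw [hea, hwhat, hw]
          apply Submodule.smul_mem
          apply Submodule.sub_mem
          · exact Submodule.subset_span ⟨⟨k, hkm⟩, by simp, hu0.symm⟩
          · exact Submodule.sum_mem _ fun i _ =>
              Submodule.smul_mem _ _ (hspan_mono (hspanv_le i))
      · rw [Submodule.span_le]
        rintro z ⟨j, hj, rfl⟩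
        by_cases hjk : (j : ℕ) < k
        · have h1 : u j ∈ Submodule.span ℝ (Set.range v) := by
            rw [hvspan]; exact Submodule.subset_span ⟨j, hjk, rfl⟩
          exact hvLEe' h1
        · have hjlt : (j : ℕ) < k + 1 := hj
          have hj' : j = (⟨k, hkm⟩ : Fin m) := Fin.ext (show (j : ℕ) = k by omega)
          have hu0eq : u0 = sw • what + ∑ i, (u0 ⬝ᵥ v i) • v i := by
            rw [hwhat, smul_smul, mul_inv_cancel₀ (ne_of_gt hswpos), one_smul, hw,
              sub_add_cancel]
          have : u j = u0 := by rw [hj', ← hu0]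
          rw [this, hu0eq]
          apply Submodule.add_mem
          · exact Submodule.smul_mem _ _ (Submodule.subset_span hwhatrange)
          · exact Submodule.sum_mem _ fun i _ => Submodule.smul_mem _ _
              (hvLEe' (Submodule.subset_span ⟨i, rfl⟩))
    -- lifted eigenvectors
    set xx : Fin (k+1) → (Fin n → ℝ) := fun a => ∑ b, yv a b • e' b with hxx
    have hxxdot : ∀ a cc, e' cc ⬝ᵥ xx a = yv a cc := by
      intro a cc
      simp only [hxx]
      rw [dot_sum]
      have hcongr : ∀ b : Fin (k+1), e' cc ⬝ᵥ (yv a b • e' b)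
          = yv a b * (if cc = b then 1 else 0) :=
        fun b => by rw [dotProduct_smul, he'on, smul_eq_mul]
      rw [Finset.sum_congr rfl fun b _ => hcongr b]
      simp [mul_ite, Finset.sum_ite_eq]
    have hxself : ∀ a, xx a ⬝ᵥ xx a = yv a ⬝ᵥ yv a := by
      intro a
      have h1 : xx a ⬝ᵥ xx a = ∑ b, yv a b * (e' b ⬝ᵥ xx a) := by
        conv_lhs => rw [hxx]
        rw [sum_dot]
        exact Finset.sum_congr rfl fun b _ => by rw [smul_dotProduct, smul_eq_mul]
      rw [h1]
      rw [dotProduct]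
      exact Finset.sum_congr rfl fun b _ => by rw [hxxdot]
    have hxpos : ∀ a, 0 < xx a ⬝ᵥ xx a := by
      intro a
      rw [hxself]
      exact dot_self_pos' (hyne a)
    have hxmem : ∀ a, xx a ∈ Submodule.span ℝ (Set.range e') := by
      intro a
      simp only [hxx]
      exact Submodule.sum_mem _ fun b _ =>
        Submodule.smul_mem _ _ (Submodule.subset_span ⟨b, rfl⟩)
    have hM'range : ∀ z : Fin n → ℝ, M' *ᵥ z ∈ Submodule.span ℝ (Set.range e') := by
      intro z
      rw [hM'mul, hspanE]
      apply Submodule.sum_mem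
      intro j _
      by_cases hj : (j : ℕ) < k + 1
      · exact Submodule.smul_mem _ _ (Submodule.subset_span ⟨j, hj, rfl⟩)
      · rw [hc'zero j (le_of_not_gt hj), zero_mul, zero_smul]
        exact Submodule.zero_mem _
    have hxeig : ∀ a, M' *ᵥ xx a = lam a • xx a := by
      intro a
      have hz : M' *ᵥ xx a - lam a • xx a = 0 := by
        apply eq_zero_of_span_dot (Set.range e')
        · exact Submodule.sub_mem _ (hM'range (xx a))
            (Submodule.smul_mem _ _ (hxmem a))
        · rintro z2 ⟨cc, rfl⟩
          rw [dotProduct_sub, dotProduct_smul]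
          have hsum : M' *ᵥ xx a = ∑ b, yv a b • (M' *ᵥ e' b) := by
            conv_lhs => rw [hxx]
            exact mulVec_lincomb M' (yv a) e'
          have h1 : e' cc ⬝ᵥ (M' *ᵥ xx a) = (Bmat ε *ᵥ yv a) cc := by
            rw [hsum, dot_sum]
            have hcongr : ∀ b : Fin (k+1), e' cc ⬝ᵥ (yv a b • (M' *ᵥ e' b))
                = yv a b * (e' cc ⬝ᵥ (M' *ᵥ e' b)) :=
              fun b => by rw [dotProduct_smul, smul_eq_mul]
            rw [Finset.sum_congr rfl fun b _ => hcongr b]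
            rw [Matrix.mulVec, dotProduct]
            refine Finset.sum_congr rfl fun b _ => ?_
            rw [hM', ← hBdot ε cc b]
            ring
          rw [h1, hxxdot a cc, hyeig a]
          simp
      exact sub_eq_zero.mp hz
    have hlampos : ∀ a, 0 < lam a := by
      intro a
      have heq : xx a ⬝ᵥ (M' *ᵥ xx a) = lam a * (xx a ⬝ᵥ xx a) := by
        rw [hxeig a, dotProduct_smul, smul_eq_mul]
      have hterm : ∀ j : Fin m, 0 ≤ c' j * (u j ⬝ᵥ xx a) * (u j ⬝ᵥ xx a) := by
        intro j
        have : c' j * (u j ⬝ᵥ xx a) * (u j ⬝ᵥ xx a)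
            = c' j * ((u j ⬝ᵥ xx a) * (u j ⬝ᵥ xx a)) := by ring
        rw [this]
        exact mul_nonneg (hc'nonneg j) (mul_self_nonneg _)
      have h0 : 0 ≤ ∑ j, c' j * (u j ⬝ᵥ xx a) * (u j ⬝ᵥ xx a) :=
        Finset.sum_nonneg fun j _ => hterm j
      rcases h0.lt_or_eq with h | h
      · have hq : 0 < xx a ⬝ᵥ (M' *ᵥ xx a) := by rw [hM'dot]; exact h
        rw [heq] at hq
        nlinarith [hxpos a]
      · exfalso
        have hallz := (Finset.sum_eq_zero_iff_of_nonneg fun j _ => hterm j).mp h.symm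
        have hdotz : ∀ j : Fin m, (j : ℕ) < k + 1 → u j ⬝ᵥ xx a = 0 := by
          intro j hj
          have h1 := hallz j (Finset.mem_univ j)
          have h2 : c' j * ((u j ⬝ᵥ xx a) * (u j ⬝ᵥ xx a)) = 0 := by linarith [h1,
            (by ring : c' j * (u j ⬝ᵥ xx a) * (u j ⬝ᵥ xx a)
              = c' j * ((u j ⬝ᵥ xx a) * (u j ⬝ᵥ xx a)))]
          have h3 := (mul_eq_zero.mp h2).resolve_left (ne_of_gt (hc'pos j hj))
          exact mul_self_eq_zero.mp h3
        have hxz : xx a = 0 := by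
          apply eq_zero_of_span_dot (u '' {j : Fin m | (j : ℕ) < k + 1})
          · rw [← hspanE]; exact hxmem a
          · rintro z2 ⟨j, hj, rfl⟩; exact hdotz j hj
        exact absurd (hxpos a) (by rw [hxz]; simp)
    have hM'symmdot : ∀ x y, x ⬝ᵥ (M' *ᵥ y) = y ⬝ᵥ (M' *ᵥ x) := by
      intro x y
      rw [hM'dot, hM'dot]
      exact Finset.sum_congr rfl fun j _ => by ring
    have hxorth : ∀ a b, a ≠ b → xx a ⬝ᵥ xx b = 0 := by
      intro a b hab
      have h1 : xx a ⬝ᵥ (M' *ᵥ xx b) = lam b * (xx a ⬝ᵥ xx b) := by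
        rw [hxeig b, dotProduct_smul, smul_eq_mul]
      have h2 : xx b ⬝ᵥ (M' *ᵥ xx a) = lam a * (xx b ⬝ᵥ xx a) := by
        rw [hxeig a, dotProduct_smul, smul_eq_mul]
      have h3 := hM'symmdot (xx a) (xx b)
      have h4 : xx b ⬝ᵥ xx a = xx a ⬝ᵥ xx b := dotProduct_comm _ _
      have h5 : lam b * (xx a ⬝ᵥ xx b) = lam a * (xx a ⬝ᵥ xx b) := by
        rw [← h1, h3, h2, h4]
      have h6 : (lam b - lam a) * (xx a ⬝ᵥ xx b) = 0 := by
        rw [sub_mul, h5, sub_self]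
      have h7 : lam b - lam a ≠ 0 :=
        sub_ne_zero_of_ne (fun h => hab (hlamanti.injective h.symm))
      exact (mul_eq_zero.mp h6).resolve_left h7
    set vnew : Fin (k+1) → (Fin n → ℝ) :=
      fun a => (Real.sqrt (xx a ⬝ᵥ xx a))⁻¹ • xx a with hvnew
    have hsx : ∀ a, 0 < Real.sqrt (xx a ⬝ᵥ xx a) := fun a => Real.sqrt_pos.mpr (hxpos a)
    have hvnewon : ∀ a b, vnew a ⬝ᵥ vnew b = if a = b then 1 else 0 := by
      intro a b
      simp only [hvnew]
      rw [smul_dotProduct, dotProduct_smul, smul_eq_mul, smul_eq_mul]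
      by_cases hab : a = b
      · subst hab
        rw [if_pos rfl]
        have hss2 : Real.sqrt (xx a ⬝ᵥ xx a) * Real.sqrt (xx a ⬝ᵥ xx a) = xx a ⬝ᵥ xx a :=
          Real.mul_self_sqrt (le_of_lt (hxpos a))
        have hne2 : Real.sqrt (xx a ⬝ᵥ xx a) ≠ 0 := ne_of_gt (hsx a)
        field_simp
        rw [sq, hss2]
      · rw [if_neg hab, hxorth a b hab]
        ring
    have hvneweig : ∀ a, M' *ᵥ vnew a = lam a • vnew a := by
      intro a
      simp only [hvnew]
      rw [← Matrix.mulVecLin_apply, LinearMap.map_smul, Matrix.mulVecLin_apply, hxeig a,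
        smul_comm]
    have hvnew_le : Submodule.span ℝ (Set.range vnew)
        ≤ Submodule.span ℝ (u '' {j : Fin m | (j : ℕ) < k + 1}) := by
      rw [Submodule.span_le]
      rintro z ⟨a, rfl⟩
      rw [← hspanE]
      simp only [hvnew]
      exact Submodule.smul_mem _ _ (hxmem a)
    have hvnewindep : LinearIndependent ℝ vnew := by
      rw [Fintype.linearIndependent_iff]
      intro g hg i
      have hdot : vnew i ⬝ᵥ (∑ b, g b • vnew b) = g i := by
        rw [dot_sum]
        have hcongr : ∀ b : Fin (k+1), vnew i ⬝ᵥ (g b • vnew b)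
            = g b * (if i = b then 1 else 0) :=
          fun b => by rw [dotProduct_smul, hvnewon, smul_eq_mul]
        rw [Finset.sum_congr rfl fun b _ => hcongr b]
        simp [mul_ite, Finset.sum_ite_eq]
      rw [hg] at hdot
      simpa using hdot.symm
    have hcard1 : Module.finrank ℝ (Submodule.span ℝ (Set.range vnew)) = k + 1 := by
      rw [finrank_span_eq_card hvnewindep]
      simp
    have hSindep : LinearIndependent ℝ (fun j : {j : Fin m // (j : ℕ) < k + 1} => u j) :=
      hu.comp _ Subtype.val_injective
    have hSspan : Set.range (fun j : {j : Fin m // (j : ℕ) < k + 1} => u j)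
        = u '' {j : Fin m | (j : ℕ) < k + 1} := by
      have : (fun j : {j : Fin m // (j : ℕ) < k + 1} => u j) = u ∘ Subtype.val := rfl
      rw [this, Set.range_comp, Subtype.range_coe_subtype]
    have hcard2 : Module.finrank ℝ
        (Submodule.span ℝ (u '' {j : Fin m | (j : ℕ) < k + 1})) = k + 1 := by
      rw [← hSspan, finrank_span_eq_card hSindep]
      rw [Fintype.card_subtype]
      exact card_filter_lt m (k+1) hk1
    have hvnewspan : Submodule.span ℝ (Set.range vnew)
        = Submodule.span ℝ (u '' {j : Fin m | (j : ℕ) < k + 1}) :=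
      Submodule.eq_of_le_of_finrank_le hvnew_le (by rw [hcard1, hcard2])
    refine ⟨c', lam, vnew, hc'pos, hc'zero, hlamanti, hlampos, hvnewon, hvnewspan, ?_⟩
    intro a
    rw [← hM'sum]
    exact hvneweig a

end Stmt6Aux


open Matrix

/-- if `E ⊆ ℝⁿ` is an `m`-dimensional subspace and `P` is the orthogonal
projection onto `E` (symmetric, idempotent, with fixed-point set `E`), then there is a
diagonal matrix `D` such that `P D P`, restricted to `E`, has `m` distinct nonzero
eigenvalues (each with an eigenvector lying in `E`). -/
theorem stmt_6 (n m : ℕ) (E : Submodule ℝ (Fin n → ℝ)) (hE : Module.finrank ℝ E = m)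
    (P : Matrix (Fin n) (Fin n) ℝ) (hPsymm : Pᵀ = P) (hPidem : P * P = P)
    (hPproj : ∀ x : Fin n → ℝ, x ∈ E ↔ P.mulVec x = x) :
    ∃ D : Matrix (Fin n) (Fin n) ℝ, D.IsDiag ∧
      ∃ μ : Fin m → ℝ, Function.Injective μ ∧ (∀ i, μ i ≠ 0) ∧
        ∀ i, ∃ v ∈ E, v ≠ 0 ∧ (P * D * P).mulVec v = μ i • v := by
  classical
  set q : Fin n → (Fin n → ℝ) := fun i => fun a => P a i with hq
  have hsym : ∀ a b, P a b = P b a := by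
    intro a b
    conv_lhs => rw [show P = Pᵀ from hPsymm.symm]
    rfl
  have hqE : ∀ i, q i ∈ E := by
    intro i
    rw [hPproj]
    have h1 : q i = P *ᵥ (Pi.single i 1) := by
      ext a
      simp only [hq, Matrix.mulVec, dotProduct]
      rw [Finset.sum_eq_single i]
      · simp
      · intro b _ hb
        rw [Pi.single_eq_of_ne hb, mul_zero]
      · intro h; exact absurd (Finset.mem_univ i) h
    rw [h1, Matrix.mulVec_mulVec, hPidem]
  have hspan_q : Submodule.span ℝ (Set.range q) = E := by
    apply le_antisymm
    · rw [Submodule.span_le]; rintro z ⟨i, rfl⟩; exact hqE i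
    · intro x hx
      have hPx : P *ᵥ x = x := (hPproj x).mp hx
      have hxsum : x = ∑ i, x i • q i := by
        ext a
        calc x a = (P *ᵥ x) a := by rw [hPx]
          _ = ∑ i, P a i * x i := by rw [Matrix.mulVec, dotProduct]
          _ = (∑ i, x i • q i) a := by
              rw [Finset.sum_apply]
              exact Finset.sum_congr rfl fun i _ => by
                simp only [hq, Pi.smul_apply, smul_eq_mul]
                ring
      rw [hxsum]
      exact Submodule.sum_mem _ fun i _ =>
        Submodule.smul_mem _ _ (Submodule.subset_span ⟨i, rfl⟩)
  obtain ⟨bset, hbsub, hbspan, hbindep⟩ := exists_linearIndependent ℝ (Set.range q)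
  have hbfin : bset.Finite := hbindep.setFinite
  haveI : Fintype bset := hbfin.fintype
  have hfr : Module.finrank ℝ (Submodule.span ℝ bset) = bset.toFinset.card :=
    finrank_span_set_eq_card hbindep
  have hbcard : Fintype.card bset = m := by
    rw [← Set.toFinset_card]
    rw [hbspan, hspan_q] at hfr
    rw [← hfr, hE]
  have e : Fin m ≃ bset := (Fintype.equivFinOfCardEq hbcard).symm
  set u : Fin m → (Fin n → ℝ) := fun j => ((e j : bset) : Fin n → ℝ) with hudef
  have hu : LinearIndependent ℝ u := hbindep.comp _ e.injective
  have hrangeu : Set.range u = bset := by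
    have h1 : Set.range u = Set.range ((↑) : bset → (Fin n → ℝ)) :=
      e.surjective.range_comp _
    rw [h1, Subtype.range_coe]
  have hspanu : Submodule.span ℝ (Set.range u) = E := by
    rw [hrangeu, hbspan, hspan_q]
  have hcols : ∀ j, ∃ i, q i = u j := fun j => hbsub (e j).2
  choose σ hσ using hcols
  obtain ⟨c, lam, v, hcpos, hczero, hlamanti, hlampos, hvon, hvspan, heig⟩ :=
    key u hu m le_rfl
  set dd : Fin n → ℝ := fun i => ∑ j, if σ j = i then c j else 0 with hdd
  set D : Matrix (Fin n) (Fin n) ℝ := Matrix.diagonal dd with hD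
  have hPDP : P * D * P = ∑ j, c j • vecMulVec (u j) (u j) := by
    ext a b
    have hleft : ∀ x, (P * D) a x = P a x * dd x := by
      intro x
      rw [hD, Matrix.mul_diagonal]
    rw [Matrix.mul_apply]
    rw [Finset.sum_congr rfl fun x _ => by rw [hleft x]]
    have hexp : ∀ x, P a x * dd x * P x b
        = ∑ j, (if σ j = x then c j else 0) * (u j a * u j b) := by
      intro x
      calc P a x * dd x * P x b
          = ∑ j, P a x * (if σ j = x then c j else 0) * P x b := by
            simp only [hdd]
            rw [Finset.mul_sum, Finset.sum_mul]
        _ = ∑ j, (if σ j = x then c j else 0) * (u j a * u j b) := by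
            refine Finset.sum_congr rfl fun j _ => ?_
            by_cases hx : σ j = x
            · rw [if_pos hx, ← hσ j, hx]
              simp only [hq]
              rw [hsym x b]
              ring
            · rw [if_neg hx]
              ring
    rw [Finset.sum_congr rfl fun x _ => hexp x, Finset.sum_comm]
    rw [Matrix.sum_apply]
    refine Finset.sum_congr rfl fun j _ => ?_
    rw [← Finset.sum_mul, Finset.sum_ite_eq, if_pos (Finset.mem_univ _)]
    simp only [Matrix.smul_apply, vecMulVec_apply, smul_eq_mul]
  have hsetuniv : {j : Fin m | (j : ℕ) < m} = Set.univ := by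
    ext j; simpa using j.isLt
  have hvE : ∀ i, v i ∈ E := by
    intro i
    have h1 : v i ∈ Submodule.span ℝ (Set.range v) := Submodule.subset_span ⟨i, rfl⟩
    rw [hvspan, hsetuniv, Set.image_univ, hspanu] at h1
    exact h1
  refine ⟨D, hD ▸ Matrix.isDiag_diagonal dd, lam, hlamanti.injective,
    fun i => ne_of_gt (hlampos i), ?_⟩
  intro i
  refine ⟨v i, hvE i, ?_, ?_⟩
  · intro h0
    have h1 := hvon i i
    rw [h0, if_pos rfl] at h1
    simp at h1
  · rw [hPDP]
    exact heig i
end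

section
/- Let w_1, …, w_m ∈ ℝᵐ be linearly independent. Then there exists a constant C > 0 such that whenever d_1 > 0 and d_{i+1} > C·d_i for all i ∈ {1,…,m−1}, the symmetric matrix W = Σ_{i=1}^m d_i w_i w_iᵀ has m distinct eigenvalues. -/
open Matrix Module Finset
open scoped RealInnerProductSpace

section Aux

variable {m : ℕ} {A : Matrix (Fin m) (Fin m) ℝ}

lemma dot_eq_inner' (x y : EuclideanSpace ℝ (Fin m)) : x ⬝ᵥ y = ⟪x, y⟫ := by
  simp [dotProduct, PiLp.inner_apply, RCLike.inner_apply, mul_comm]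

lemma dot_self_expand (hA : A.IsHermitian) (x : EuclideanSpace ℝ (Fin m)) :
    x ⬝ᵥ x = ∑ i, (⟪hA.eigenvectorBasis i, x⟫)^2 := by
  rw [dot_eq_inner', ← (hA.eigenvectorBasis).sum_inner_mul_inner x x]
  refine Finset.sum_congr rfl fun i _ => ?_
  rw [sq, real_inner_comm]

lemma dot_mulVec_expand (hA : A.IsHermitian) (x : EuclideanSpace ℝ (Fin m)) :
    x ⬝ᵥ (A *ᵥ x) = ∑ i, hA.eigenvalues i * (⟪hA.eigenvectorBasis i, x⟫)^2 := by
  have hAt : Aᵀ = A := by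
    have := hA.eq
    rwa [Matrix.conjTranspose_eq_transpose_of_trivial] at this
  have key : ∀ i, ⟪hA.eigenvectorBasis i, (WithLp.toLp 2 (A *ᵥ x) : EuclideanSpace ℝ (Fin m))⟫
      = hA.eigenvalues i * ⟪hA.eigenvectorBasis i, x⟫ := by
    intro i
    rw [← dot_eq_inner', WithLp.ofLp_toLp, Matrix.dotProduct_mulVec, ← Matrix.mulVec_transpose, hAt]
    erw [hA.mulVec_eigenvectorBasis]
    rw [smul_dotProduct, dot_eq_inner']
    rfl
  have h1 : x ⬝ᵥ (A *ᵥ x) = ⟪x, (WithLp.toLp 2 (A *ᵥ x) : EuclideanSpace ℝ (Fin m))⟫ :=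
    dot_eq_inner' x (WithLp.toLp 2 (A *ᵥ x))
  rw [h1, ← (hA.eigenvectorBasis).sum_inner_mul_inner x (WithLp.toLp 2 (A *ᵥ x) : EuclideanSpace ℝ (Fin m))]
  refine Finset.sum_congr rfl fun i _ => ?_
  rw [key i, sq, real_inner_comm]
  ring

lemma eig_count_le (hA : A.IsHermitian) (t : ℝ) (U : Submodule ℝ (EuclideanSpace ℝ (Fin m)))
    (hq : ∀ x : EuclideanSpace ℝ (Fin m), x ∈ U → x ⬝ᵥ (A *ᵥ x) ≤ t * (x ⬝ᵥ x)) :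
    finrank ℝ U ≤ (univ.filter fun i => hA.eigenvalues i ≤ t).card := by
  classical
  set v := hA.eigenvectorBasis with hv
  set S : Finset (Fin m) := univ.filter (fun i => ¬ hA.eigenvalues i ≤ t) with hS
  set b : {i // i ∈ S} → EuclideanSpace ℝ (Fin m) := fun i => v i.1 with hb
  have hbli : LinearIndependent ℝ b :=
    (hA.eigenvectorBasis.orthonormal.linearIndependent).comp Subtype.val Subtype.val_injective
  set F : Submodule ℝ (EuclideanSpace ℝ (Fin m)) := Submodule.span ℝ (Set.range b) with hF
  have hFrank : finrank ℝ F = S.card := by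
    rw [hF, finrank_span_eq_card hbli, Fintype.card_coe]
  have hdisj : Disjoint U F := by
    rw [Submodule.disjoint_def]
    intro x hxU hxF
    by_contra hx0
    have hzero : ∀ i, hA.eigenvalues i ≤ t → ⟪v i, x⟫ = 0 := by
      intro i hi
      have hker : F ≤ LinearMap.ker (innerSL ℝ (v i)).toLinearMap := by
        rw [hF, Submodule.span_le]
        rintro _ ⟨j, rfl⟩
        simp only [SetLike.mem_coe, LinearMap.mem_ker, ContinuousLinearMap.coe_coe, innerSL_apply_apply]
        have hij : i ≠ j.1 := by
          intro h
          have hmem : ¬ hA.eigenvalues j.1 ≤ t := (Finset.mem_filter.mp j.2).2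
          have hi' : hA.eigenvalues j.1 ≤ t := by rwa [h] at hi
          exact hmem hi'
        exact hA.eigenvectorBasis.orthonormal.2 hij
      have := hker hxF
      simpa using this
    have hpos : (0:ℝ) < x ⬝ᵥ x := by
      rw [dot_eq_inner']
      have hne : ⟪x, x⟫ ≠ 0 := fun h => hx0 (inner_self_eq_zero.mp h)
      exact lt_of_le_of_ne real_inner_self_nonneg (Ne.symm hne)
    have hlt : t * (x ⬝ᵥ x) < x ⬝ᵥ (A *ᵥ x) := by
      rw [dot_mulVec_expand hA, dot_self_expand hA, Finset.mul_sum]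
      have hex : ∃ i : Fin m, (⟪v i, x⟫)^2 ≠ 0 := by
        by_contra hc
        push_neg at hc
        have : x ⬝ᵥ x = 0 := by
          rw [dot_self_expand hA]
          exact Finset.sum_eq_zero fun i _ => hc i
        linarith
      obtain ⟨i₀, hi₀⟩ := hex
      have hti₀ : t < hA.eigenvalues i₀ := by
        by_contra hc
        push_neg at hc
        exact hi₀ (by rw [hzero i₀ hc]; ring)
      refine Finset.sum_lt_sum (fun i _ => ?_) ⟨i₀, Finset.mem_univ _, ?_⟩
      · rcases le_or_gt (hA.eigenvalues i) t with h | h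
        · rw [hzero i h]; ring_nf; exact le_refl _
        · nlinarith [sq_nonneg (⟪v i, x⟫)]
      · have : (0:ℝ) < (⟪v i₀, x⟫)^2 := lt_of_le_of_ne (sq_nonneg _) (Ne.symm hi₀)
        nlinarith
    exact absurd (hq x hxU) (not_le.mpr hlt)
  have hsum : finrank ℝ U + finrank ℝ F ≤ m := by
    have := Submodule.finrank_add_finrank_le_of_disjoint hdisj
    simpa [finrank_euclideanSpace] using this
  have hcards : (univ.filter fun i => hA.eigenvalues i ≤ t).card + S.card = m := by
    rw [hS]
    rw [Finset.card_filter_add_card_filter_not]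
    simp
  omega

lemma eig_count_ge (hA : A.IsHermitian) (t : ℝ) (U : Submodule ℝ (EuclideanSpace ℝ (Fin m)))
    (hq : ∀ x : EuclideanSpace ℝ (Fin m), x ∈ U → t * (x ⬝ᵥ x) ≤ x ⬝ᵥ (A *ᵥ x)) :
    finrank ℝ U ≤ (univ.filter fun i => t ≤ hA.eigenvalues i).card := by
  classical
  set v := hA.eigenvectorBasis with hv
  set S : Finset (Fin m) := univ.filter (fun i => ¬ t ≤ hA.eigenvalues i) with hS
  set b : {i // i ∈ S} → EuclideanSpace ℝ (Fin m) := fun i => v i.1 with hb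
  have hbli : LinearIndependent ℝ b :=
    (hA.eigenvectorBasis.orthonormal.linearIndependent).comp Subtype.val Subtype.val_injective
  set F : Submodule ℝ (EuclideanSpace ℝ (Fin m)) := Submodule.span ℝ (Set.range b) with hF
  have hFrank : finrank ℝ F = S.card := by
    rw [hF, finrank_span_eq_card hbli, Fintype.card_coe]
  have hdisj : Disjoint U F := by
    rw [Submodule.disjoint_def]
    intro x hxU hxF
    by_contra hx0
    have hzero : ∀ i, t ≤ hA.eigenvalues i → ⟪v i, x⟫ = 0 := by
      intro i hi
      have hker : F ≤ LinearMap.ker (innerSL ℝ (v i)).toLinearMap := by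
        rw [hF, Submodule.span_le]
        rintro _ ⟨j, rfl⟩
        simp only [SetLike.mem_coe, LinearMap.mem_ker, ContinuousLinearMap.coe_coe, innerSL_apply_apply]
        have hij : i ≠ j.1 := by
          intro h
          have hmem : ¬ t ≤ hA.eigenvalues j.1 := (Finset.mem_filter.mp j.2).2
          have hi' : t ≤ hA.eigenvalues j.1 := by rwa [h] at hi
          exact hmem hi'
        exact hA.eigenvectorBasis.orthonormal.2 hij
      have := hker hxF
      simpa using this
    have hpos : (0:ℝ) < x ⬝ᵥ x := by
      rw [dot_eq_inner']
      have hne : ⟪x, x⟫ ≠ 0 := fun h => hx0 (inner_self_eq_zero.mp h)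
      exact lt_of_le_of_ne real_inner_self_nonneg (Ne.symm hne)
    have hlt : x ⬝ᵥ (A *ᵥ x) < t * (x ⬝ᵥ x) := by
      rw [dot_mulVec_expand hA, dot_self_expand hA, Finset.mul_sum]
      have hex : ∃ i : Fin m, (⟪v i, x⟫)^2 ≠ 0 := by
        by_contra hc
        push_neg at hc
        have : x ⬝ᵥ x = 0 := by
          rw [dot_self_expand hA]
          exact Finset.sum_eq_zero fun i _ => hc i
        linarith
      obtain ⟨i₀, hi₀⟩ := hex
      have hti₀ : hA.eigenvalues i₀ < t := by
        by_contra hc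
        push_neg at hc
        exact hi₀ (by rw [hzero i₀ hc]; ring)
      refine Finset.sum_lt_sum (fun i _ => ?_) ⟨i₀, Finset.mem_univ _, ?_⟩
      · rcases le_or_gt t (hA.eigenvalues i) with h | h
        · rw [hzero i h]; ring_nf; exact le_refl _
        · nlinarith [sq_nonneg (⟪v i, x⟫)]
      · have : (0:ℝ) < (⟪v i₀, x⟫)^2 := lt_of_le_of_ne (sq_nonneg _) (Ne.symm hi₀)
        nlinarith
    exact absurd (hq x hxU) (not_le.mpr hlt)
  have hsum : finrank ℝ U + finrank ℝ F ≤ m := by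
    have := Submodule.finrank_add_finrank_le_of_disjoint hdisj
    simpa [finrank_euclideanSpace] using this
  have hcards : (univ.filter fun i => t ≤ hA.eigenvalues i).card + S.card = m := by
    rw [hS]
    rw [Finset.card_filter_add_card_filter_not]
    simp
  omega

lemma exists_coercivity (w : Fin m → (Fin m → ℝ)) (hw : LinearIndependent ℝ w) :
    ∃ c : ℝ, 0 < c ∧ ∀ x : EuclideanSpace ℝ (Fin m), c * (x ⬝ᵥ x) ≤ ∑ i, (w i ⬝ᵥ x)^2 := by
  classical
  set E := EuclideanSpace ℝ (Fin m)
  set f : E →ₗ[ℝ] E :=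
    (WithLp.linearEquiv 2 ℝ (Fin m → ℝ)).symm.toLinearMap ∘ₗ
      (Matrix.mulVecLin (Matrix.of w)) ∘ₗ (WithLp.linearEquiv 2 ℝ (Fin m → ℝ)).toLinearMap
    with hf
  have hfapp : ∀ (x : E) (i : Fin m), f x i = w i ⬝ᵥ x := fun x i => rfl
  have hinj : Function.Injective f := by
    rw [← LinearMap.ker_eq_bot]
    rw [LinearMap.ker_eq_bot']
    intro x hx
    have hdots : ∀ i, w i ⬝ᵥ x = 0 := by
      intro i
      have := congrFun (congrArg (WithLp.equiv 2 (Fin m → ℝ)) hx) i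
      simpa [hfapp] using this
    have hspan : Submodule.span ℝ (Set.range w) = ⊤ := by
      apply LinearIndependent.span_eq_top_of_card_eq_finrank' hw
      simp [Module.finrank_pi]
    have hx_mem : (x : Fin m → ℝ) ∈ Submodule.span ℝ (Set.range w) := by
      rw [hspan]; trivial
    rw [Submodule.mem_span_range_iff_exists_fun] at hx_mem
    obtain ⟨c, hc⟩ := hx_mem
    have hxx : (x : Fin m → ℝ) ⬝ᵥ x = 0 := by
      nth_rewrite 1 [← hc]
      have hexp : (∑ i, c i • w i) ⬝ᵥ (x : Fin m → ℝ) = ∑ i, c i * (w i ⬝ᵥ x) := by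
        simp only [dotProduct, Finset.sum_apply, Pi.smul_apply, smul_eq_mul,
          Finset.sum_mul, Finset.mul_sum]
        rw [Finset.sum_comm]
        refine Finset.sum_congr rfl fun i _ => Finset.sum_congr rfl fun k _ => by ring
      rw [hexp]
      refine Finset.sum_eq_zero fun i _ => ?_
      rw [hdots i, mul_zero]
    have : ⟪(x : E), x⟫ = 0 := by rw [← dot_eq_inner']; exact hxx
    exact inner_self_eq_zero.mp this
  have hsurj : Function.Surjective f := (LinearMap.injective_iff_surjective).mp hinj
  set e : E ≃ₗ[ℝ] E := LinearEquiv.ofBijective f ⟨hinj, hsurj⟩ with he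
  set ec : E ≃L[ℝ] E := e.toContinuousLinearEquiv with hec
  set M : ℝ := max 1 ‖(ec.symm : E →L[ℝ] E)‖ with hM
  have hM1 : (1:ℝ) ≤ M := le_max_left _ _
  have hM0 : (0:ℝ) < M := lt_of_lt_of_le one_pos hM1
  refine ⟨(M^2)⁻¹, by positivity, fun x => ?_⟩
  have hxle : ‖x‖ ≤ M * ‖f x‖ := by
    have h1 : ec.symm (f x) = x := by
      have h2 : ec.symm (ec x) = x := ec.symm_apply_apply x
      have h3 : ec x = f x := congrFun (LinearEquiv.coe_toContinuousLinearEquiv' e) x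
      rwa [h3] at h2
    calc ‖x‖ = ‖ec.symm (f x)‖ := by rw [h1]
      _ ≤ ‖(ec.symm : E →L[ℝ] E)‖ * ‖f x‖ := (ec.symm : E →L[ℝ] E).le_opNorm _
      _ ≤ M * ‖f x‖ := by
          apply mul_le_mul_of_nonneg_right (le_max_right _ _) (norm_nonneg _)
  have hfx : (f x : Fin m → ℝ) ⬝ᵥ (f x) = ∑ i, (w i ⬝ᵥ x)^2 := by
    simp [dotProduct, hfapp, sq]
  have hx2 : (x : Fin m → ℝ) ⬝ᵥ x = ‖x‖^2 := by
    rw [dot_eq_inner', real_inner_self_eq_norm_sq]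
  have hfx2 : (f x : Fin m → ℝ) ⬝ᵥ (f x) = ‖f x‖^2 := by
    rw [dot_eq_inner', real_inner_self_eq_norm_sq]
  rw [← hfx, hfx2, hx2]
  rw [inv_mul_le_iff₀ (by positivity)]
  nlinarith [norm_nonneg x, norm_nonneg (f x)]

lemma orth_span_rank (w' : Fin m → EuclideanSpace ℝ (Fin m)) (hw' : LinearIndependent ℝ w')
    (s : Finset (Fin m)) :
    finrank ℝ ((Submodule.span ℝ (w' '' ↑s))ᗮ : Submodule ℝ (EuclideanSpace ℝ (Fin m)))
      = m - s.card := by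
  classical
  have hb : LinearIndependent ℝ (fun i : {i // i ∈ s} => w' i.1) :=
    hw'.comp Subtype.val Subtype.val_injective
  have hrange : Set.range (fun i : {i // i ∈ s} => w' i.1) = w' '' ↑s := by
    rw [show (fun i : {i // i ∈ s} => w' i.1) = w' ∘ Subtype.val from rfl, Set.range_comp,
      Subtype.range_coe]
  have h1 : finrank ℝ (Submodule.span ℝ (w' '' ↑s)) = s.card := by
    rw [← hrange, finrank_span_eq_card hb, Fintype.card_coe]
  have h2 := Submodule.finrank_add_finrank_orthogonal
    (K := Submodule.span ℝ (w' '' (↑s : Set (Fin m))))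
  rw [h1, finrank_euclideanSpace, Fintype.card_fin] at h2
  have hle : s.card ≤ m := by
    simpa using Finset.card_le_univ s
  omega

lemma W_dot (d : Fin m → ℝ) (w : Fin m → Fin m → ℝ) (x : Fin m → ℝ) :
    x ⬝ᵥ ((∑ j, d j • Matrix.vecMulVec (w j) (w j)) *ᵥ x) = ∑ j, d j * (w j ⬝ᵥ x)^2 := by
  classical
  have hmv : ∀ i, ((∑ j, d j • Matrix.vecMulVec (w j) (w j)) *ᵥ x) i
      = ∑ j, d j * (w j ⬝ᵥ x) * w j i := by
    intro i
    simp only [Matrix.mulVec, dotProduct, Matrix.sum_apply, Matrix.smul_apply,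
      Matrix.vecMulVec_apply, smul_eq_mul, Finset.sum_mul, Finset.mul_sum]
    rw [Finset.sum_comm]
    refine Finset.sum_congr rfl fun j _ => Finset.sum_congr rfl fun k _ => by ring
  have h1 : x ⬝ᵥ ((∑ j, d j • Matrix.vecMulVec (w j) (w j)) *ᵥ x)
      = ∑ i, x i * ∑ j, d j * (w j ⬝ᵥ x) * w j i := by
    rw [dotProduct]
    exact Finset.sum_congr rfl fun i _ => by rw [hmv i]
  rw [h1]
  simp only [Finset.mul_sum]
  rw [Finset.sum_comm]
  refine Finset.sum_congr rfl fun j _ => ?_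
  have : ∑ i, x i * (d j * (w j ⬝ᵥ x) * w j i)
      = (d j * (w j ⬝ᵥ x)) * ∑ i, w j i * x i := by
    rw [Finset.mul_sum]
    exact Finset.sum_congr rfl fun i _ => by ring
  rw [this]
  rw [show ∑ i, w j i * x i = w j ⬝ᵥ x from rfl]
  ring

end Aux

set_option maxHeartbeats 1000000 in
/-- if `w 0, …, w (m-1) ∈ ℝᵐ` are linearly independent, then there is a
constant `C > 0` such that whenever the first coefficient `d` is positive and each
successive coefficient exceeds `C` times the previous one, the symmetric matrix
`W = ∑ i, d i • w i w iᵀ` has `m` distinct eigenvalues. -/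
theorem stmt_7 (m : ℕ) (w : Fin m → (Fin m → ℝ)) (hw : LinearIndependent ℝ w) :
    ∃ C : ℝ, 0 < C ∧ ∀ d : Fin m → ℝ,
      (∀ i : Fin m, (i : ℕ) = 0 → 0 < d i) →
      (∀ i : Fin m, ∀ hi : (i : ℕ) + 1 < m, C * d i < d ⟨(i : ℕ) + 1, hi⟩) →
      ∃ μ : Fin m → ℝ, Function.Injective μ ∧
        ∀ i, Module.End.HasEigenvalue
          (Matrix.toLin' (∑ j, d j • Matrix.vecMulVec (w j) (w j))) (μ i) := by
  classical
  obtain ⟨c₀, hc₀, hcoer⟩ := exists_coercivity w hw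
  set w' : Fin m → EuclideanSpace ℝ (Fin m) :=
    fun i => (WithLp.equiv 2 (Fin m → ℝ)).symm (w i) with hw'def
  have hw' : LinearIndependent ℝ w' := by
    have := hw.map' (WithLp.linearEquiv 2 ℝ (Fin m → ℝ)).symm.toLinearMap
      (LinearMap.ker_eq_bot.mpr (WithLp.linearEquiv 2 ℝ (Fin m → ℝ)).symm.injective)
    exact this
  have hwdot : ∀ i (x : EuclideanSpace ℝ (Fin m)), w i ⬝ᵥ x = ⟪w' i, x⟫ :=
    fun i x => dot_eq_inner' (w' i) x
  have hwdot2 : ∀ i, w i ⬝ᵥ w i = ⟪w' i, w' i⟫ :=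
    fun i => dot_eq_inner' (w' i) (w' i)
  have hwnn : ∀ i, 0 ≤ w i ⬝ᵥ w i :=
    fun i => Finset.sum_nonneg fun k _ => mul_self_nonneg _
  set B : ℝ := (∑ i, (w i ⬝ᵥ w i)) + 1 with hB
  have hB0 : 0 < B := by
    have : 0 ≤ ∑ i, (w i ⬝ᵥ w i) := Finset.sum_nonneg fun i _ => hwnn i
    rw [hB]; linarith
  set C : ℝ := max 1 (B / c₀) with hC
  have hC1 : (1:ℝ) ≤ C := le_max_left _ _
  have hC0 : (0:ℝ) < C := lt_of_lt_of_le one_pos hC1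
  have hCc : B ≤ c₀ * C := by
    have h1 : B / c₀ ≤ C := le_max_right _ _
    have := mul_le_mul_of_nonneg_left h1 hc₀.le
    rwa [mul_div_cancel₀ _ (ne_of_gt hc₀)] at this
  refine ⟨C, hC0, ?_⟩
  intro d hd0 hgrow
  -- positivity and monotonicity of d
  have hdpos : ∀ k (hk : k < m), 0 < d ⟨k, hk⟩ := by
    intro k
    induction k with
    | zero => intro hk; exact hd0 ⟨0, hk⟩ rfl
    | succ n ih =>
      intro hk
      have hn : n < m := Nat.lt_of_succ_lt hk
      have h1 := hgrow ⟨n, hn⟩ hk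
      have h2 := ih hn
      nlinarith
  have hdmono : ∀ (k l : ℕ) (hk : k < m) (hl : l < m), k ≤ l → d ⟨k, hk⟩ ≤ d ⟨l, hl⟩ := by
    intro k l hk hl hkl
    induction l with
    | zero =>
      have hk0 : k = 0 := Nat.le_zero.mp hkl
      have : (⟨k, hk⟩ : Fin m) = ⟨0, hl⟩ := Fin.ext hk0
      rw [this]
    | succ n ih =>
      have hn : n < m := Nat.lt_of_succ_lt hl
      rcases Nat.lt_or_ge k (n+1) with h | h
      · have h1 := ih hn (Nat.lt_succ_iff.mp h)
        have hg := hgrow ⟨n, hn⟩ hl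
        have hp := hdpos n hn
        nlinarith
      · have hkn : k = n + 1 := le_antisymm hkl h
        have : (⟨k, hk⟩ : Fin m) = ⟨n+1, hl⟩ := Fin.ext hkn
        rw [this]
  have hdmono' : ∀ i j : Fin m, i ≤ j → d i ≤ d j := by
    intro i j hij
    have := hdmono i j i.isLt j.isLt hij
    simpa using this
  have hdpos' : ∀ i : Fin m, 0 < d i := by
    intro i
    have := hdpos i i.isLt
    simpa using this
  set W : Matrix (Fin m) (Fin m) ℝ := ∑ j, d j • Matrix.vecMulVec (w j) (w j) with hWdef
  have hW : W.IsHermitian := by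
    rw [Matrix.IsHermitian]
    ext i k
    simp only [Matrix.conjTranspose_apply, hWdef, Matrix.sum_apply, Matrix.smul_apply,
      Matrix.vecMulVec_apply, smul_eq_mul, star_trivial]
    exact Finset.sum_congr rfl fun j _ => by ring
  have hqform : ∀ x : EuclideanSpace ℝ (Fin m), x ⬝ᵥ (W *ᵥ x) = ∑ j, d j * (w j ⬝ᵥ x)^2 :=
    fun x => W_dot d w x
  -- step inequality
  have hstep : ∀ (j j' : Fin m), (j':ℕ) = (j:ℕ)+1 → B * d j < c₀ * d j' := by
    intro j j' hjj
    have hg := hgrow j (hjj ▸ j'.isLt)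
    have hdj' : d ⟨(j:ℕ)+1, hjj ▸ j'.isLt⟩ = d j' := by
      congr 1
      exact Fin.ext hjj.symm
    rw [hdj'] at hg
    have hdp := hdpos' j
    nlinarith
  -- upper count
  have hupper : ∀ j : Fin m, (j:ℕ)+1 ≤ (univ.filter fun i => hW.eigenvalues i ≤ B * d j).card := by
    intro j
    set U : Submodule ℝ (EuclideanSpace ℝ (Fin m)) :=
      (Submodule.span ℝ (w' '' ↑(Finset.Ioi j)))ᗮ with hU
    have hUrank : finrank ℝ U = (j:ℕ) + 1 := by
      rw [hU, orth_span_rank w' hw' (Finset.Ioi j), Fin.card_Ioi]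
      have := j.isLt
      omega
    have hcount := eig_count_le hW (B * d j) U ?hq
    · omega
    case hq =>
      intro x hx
      have hdots : ∀ i : Fin m, j < i → w i ⬝ᵥ x = 0 := by
        intro i hi
        have hmem : w' i ∈ Submodule.span ℝ (w' '' ↑(Finset.Ioi j)) :=
          Submodule.subset_span ⟨i, by simpa using hi, rfl⟩
        have := (Submodule.mem_orthogonal _ x).mp hx (w' i) hmem
        rw [hwdot]
        exact this
      rw [hqform x]
      have hxx : 0 ≤ x ⬝ᵥ x := by
        rw [dot_eq_inner']
        exact real_inner_self_nonneg
      have hterm : ∀ i : Fin m, d i * (w i ⬝ᵥ x)^2 ≤ d j * ((w i ⬝ᵥ w i) * (x ⬝ᵥ x)) := by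
        intro i
        rcases lt_or_ge j i with h | h
        · rw [hdots i h]
          have h1 : 0 ≤ (w i ⬝ᵥ w i) * (x ⬝ᵥ x) := mul_nonneg (hwnn i) hxx
          nlinarith [hdpos' j]
        · have hdij : d i ≤ d j := hdmono' i j h
          have hcs : (w i ⬝ᵥ x)^2 ≤ (w i ⬝ᵥ w i) * (x ⬝ᵥ x) := by
            rw [hwdot i x, hwdot2 i]
            rw [dot_eq_inner' x x]
            have := real_inner_mul_inner_self_le (w' i) x
            nlinarith [this]
          have := hdpos' i
          nlinarith [sq_nonneg (w i ⬝ᵥ x), hwnn i, hxx]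
      calc ∑ i, d i * (w i ⬝ᵥ x)^2 ≤ ∑ i, d j * ((w i ⬝ᵥ w i) * (x ⬝ᵥ x)) :=
            Finset.sum_le_sum fun i _ => hterm i
        _ = d j * (∑ i, (w i ⬝ᵥ w i)) * (x ⬝ᵥ x) := by
            rw [Finset.mul_sum, Finset.sum_mul]
            exact Finset.sum_congr rfl fun i _ => by ring
        _ ≤ (B * d j) * (x ⬝ᵥ x) := by
            have h1 : ∑ i, (w i ⬝ᵥ w i) ≤ B := by
              rw [hB]
              linarith
            have hdjp := hdpos' j
            have h2 : d j * (∑ i, (w i ⬝ᵥ w i)) ≤ B * d j := by nlinarith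
            exact mul_le_mul_of_nonneg_right h2 hxx
  -- lower count
  have hlower : ∀ j : Fin m, m - (j:ℕ) ≤ (univ.filter fun i => c₀ * d j ≤ hW.eigenvalues i).card := by
    intro j
    set V : Submodule ℝ (EuclideanSpace ℝ (Fin m)) :=
      (Submodule.span ℝ (w' '' ↑(Finset.Iio j)))ᗮ with hV
    have hVrank : finrank ℝ V = m - (j:ℕ) := by
      rw [hV, orth_span_rank w' hw' (Finset.Iio j), Fin.card_Iio]
    have hcount := eig_count_ge hW (c₀ * d j) V ?hq
    · omega
    case hq =>
      intro x hx
      have hdots : ∀ i : Fin m, i < j → w i ⬝ᵥ x = 0 := by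
        intro i hi
        have hmem : w' i ∈ Submodule.span ℝ (w' '' ↑(Finset.Iio j)) :=
          Submodule.subset_span ⟨i, by simpa using hi, rfl⟩
        have := (Submodule.mem_orthogonal _ x).mp hx (w' i) hmem
        rw [hwdot]
        exact this
      rw [hqform x]
      have hterm : ∀ i : Fin m, d j * (w i ⬝ᵥ x)^2 ≤ d i * (w i ⬝ᵥ x)^2 := by
        intro i
        rcases lt_or_ge i j with h | h
        · rw [hdots i h]; ring_nf; exact le_refl _
        · have : d j ≤ d i := hdmono' j i h
          nlinarith [sq_nonneg (w i ⬝ᵥ x)]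
      calc (c₀ * d j) * (x ⬝ᵥ x) = d j * (c₀ * (x ⬝ᵥ x)) := by ring
        _ ≤ d j * (∑ i, (w i ⬝ᵥ x)^2) := by
            have := hcoer x
            have := hdpos' j
            nlinarith
        _ = ∑ i, d j * (w i ⬝ᵥ x)^2 := by rw [Finset.mul_sum]
        _ ≤ ∑ i, d i * (w i ⬝ᵥ x)^2 := Finset.sum_le_sum fun i _ => hterm i
  -- exact counts
  have hexact : ∀ j : Fin m, (univ.filter fun i => hW.eigenvalues i ≤ B * d j).card = (j:ℕ)+1 := by
    intro j
    have h1 := hupper j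
    rcases Nat.lt_or_ge ((j:ℕ)+1) m with hj | hj
    · have hdisj : Disjoint (univ.filter fun i => hW.eigenvalues i ≤ B * d j)
          (univ.filter fun i => c₀ * d ⟨(j:ℕ)+1, hj⟩ ≤ hW.eigenvalues i) := by
        rw [Finset.disjoint_left]
        intro i hi1 hi2
        rw [Finset.mem_filter] at hi1 hi2
        have hst := hstep j ⟨(j:ℕ)+1, hj⟩ rfl
        linarith [hi1.2, hi2.2]
      have hcard : (univ.filter fun i => hW.eigenvalues i ≤ B * d j).card
          + (univ.filter fun i => c₀ * d ⟨(j:ℕ)+1, hj⟩ ≤ hW.eigenvalues i).card ≤ m := by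
        rw [← Finset.card_union_of_disjoint hdisj]
        have h4 := Finset.card_le_univ ((univ.filter fun i => hW.eigenvalues i ≤ B * d j)
          ∪ (univ.filter fun i => c₀ * d ⟨(j:ℕ)+1, hj⟩ ≤ hW.eigenvalues i))
        simpa using h4
      have h2 := hlower ⟨(j:ℕ)+1, hj⟩
      have h3 : ((⟨(j:ℕ)+1, hj⟩ : Fin m) : ℕ) = (j:ℕ)+1 := rfl
      rw [h3] at h2
      omega
    · have h3 : (univ.filter fun i => hW.eigenvalues i ≤ B * d j).card ≤ m := by
        have h4 := Finset.card_le_univ (univ.filter fun i => hW.eigenvalues i ≤ B * d j)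
        simpa using h4
      have := j.isLt
      omega
  -- injectivity of eigenvalues
  have hinj : Function.Injective hW.eigenvalues := by
    intro i i' hii
    by_contra hne
    have hm0 : 0 < m := i.pos
    set s : Fin m → Finset (Fin m) := fun j => univ.filter fun i => hW.eigenvalues i ≤ B * d j with hs
    have hmemlast : i ∈ s ⟨m-1, by omega⟩ := by
      have hcard := hexact ⟨m-1, by omega⟩
      have hval : ((⟨m-1, by omega⟩ : Fin m) : ℕ) = m - 1 := rfl
      have hcm : (s ⟨m-1, by omega⟩).card = m := by
        simp only [hs]
        rw [hcard, hval]
        omega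
      have huniv : s ⟨m-1, by omega⟩ = univ := Finset.eq_univ_of_card _ (by simpa using hcm)
      rw [huniv]; exact Finset.mem_univ i
    set T : Finset (Fin m) := univ.filter fun j => i ∈ s j with hT
    have hTne : T.Nonempty := ⟨⟨m-1, by omega⟩, by rw [hT, Finset.mem_filter]; exact ⟨Finset.mem_univ _, hmemlast⟩⟩
    set j₀ : Fin m := T.min' hTne with hj₀
    have hij₀ : i ∈ s j₀ := (Finset.mem_filter.mp (T.min'_mem hTne)).2
    have hi'j₀ : i' ∈ s j₀ := by
      rw [hs, Finset.mem_filter] at hij₀ ⊢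
      exact ⟨Finset.mem_univ _, by rw [← hii]; exact hij₀.2⟩
    have hcardj₀ := hexact j₀
    rcases Nat.eq_zero_or_pos (j₀:ℕ) with h0 | h0
    · have hc1 : (s j₀).card = 1 := by simp only [hs]; rw [hcardj₀, h0]
      have hsub : ({i, i'} : Finset (Fin m)) ⊆ s j₀ := by
        intro a ha
        rcases Finset.mem_insert.mp ha with rfl | ha
        · exact hij₀
        · rw [Finset.mem_singleton.mp ha]; exact hi'j₀
      have := Finset.card_le_card hsub
      rw [Finset.card_pair hne, hc1] at this
      omega
    · set jp : Fin m := ⟨(j₀:ℕ)-1, by omega⟩ with hjp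
      have hjplt : jp < j₀ := by
        rw [Fin.lt_def]
        simp only [hjp]
        omega
      have hinotp : i ∉ s jp := by
        intro hmem
        have : jp ∈ T := by rw [hT, Finset.mem_filter]; exact ⟨Finset.mem_univ _, hmem⟩
        have := T.min'_le jp this
        exact absurd this (not_le.mpr hjplt)
      have hi'notp : i' ∉ s jp := by
        intro hmem
        rw [hs, Finset.mem_filter] at hmem
        exact hinotp (by rw [hs, Finset.mem_filter]; exact ⟨Finset.mem_univ _, by rw [hii]; exact hmem.2⟩)
      have hsubsets : s jp ⊆ s j₀ := by
        intro a ha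
        rw [hs, Finset.mem_filter] at ha ⊢
        refine ⟨Finset.mem_univ _, le_trans ha.2 ?_⟩
        have : d jp ≤ d j₀ := hdmono' jp j₀ (le_of_lt hjplt)
        nlinarith
      have hdisj2 : Disjoint (s jp) ({i, i'} : Finset (Fin m)) := by
        rw [Finset.disjoint_right]
        intro a ha
        rcases Finset.mem_insert.mp ha with rfl | ha
        · exact hinotp
        · rw [Finset.mem_singleton.mp ha]; exact hi'notp
      have hsub2 : s jp ∪ {i, i'} ⊆ s j₀ := by
        apply Finset.union_subset hsubsets
        intro a ha
        rcases Finset.mem_insert.mp ha with rfl | ha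
        · exact hij₀
        · rw [Finset.mem_singleton.mp ha]; exact hi'j₀
      have hcardle := Finset.card_le_card hsub2
      rw [Finset.card_union_of_disjoint hdisj2, Finset.card_pair hne] at hcardle
      have hcardjp := hexact jp
      have hjpval : (jp:ℕ) = (j₀:ℕ) - 1 := rfl
      simp only [hs] at hcardle
      omega
  -- conclusion
  refine ⟨hW.eigenvalues, hinj, fun i => ?_⟩
  apply Module.End.hasEigenvalue_of_hasEigenvector
    (x := (WithLp.equiv 2 (Fin m → ℝ)) (hW.eigenvectorBasis i))
  constructor
  · rw [Module.End.mem_eigenspace_iff, Matrix.toLin'_apply]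
    exact hW.mulVec_eigenvectorBasis i
  · intro h
    apply hW.eigenvectorBasis.orthonormal.ne_zero i
    apply (WithLp.equiv 2 (Fin m → ℝ)).injective
    simpa using h
end

section
/- Let G be a finite simple connected graph, M₀ a generalized Laplacian on G, λ_k a simple eigenvalue of M₀ with eigenvector f_k, and suppose f_k has at least one Urschel vertex (a vertex where f_k vanishes). Then there exists a symmetric matrix M₁ supported on G such that the vector f_k¹ = (M₀ − λ_k I)⁺(−M₁ f_k) is nonzero at at least one Urschel vertex of f_k, where (M₀ − λ_k I)⁺ denotes the Moore–Penrose pseudoinverse. -/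
open Matrix

/-- A generalized Laplacian on a simple graph `G`: a symmetric matrix, negative on
adjacent pairs, and zero on distinct non-adjacent pairs. -/
def IsGenLap {V : Type*} (G : SimpleGraph V) (M : Matrix V V ℝ) : Prop :=
  M.IsSymm ∧ (∀ u v, G.Adj u v → M u v < 0) ∧ ∀ u v, u ≠ v → ¬G.Adj u v → M u v = 0

/-- A matrix is supported on `G` if its off-diagonal entries vanish off the edges. -/
def SupportedOn {V : Type*} (G : SimpleGraph V) (M : Matrix V V ℝ) : Prop :=
  ∀ u v, u ≠ v → ¬G.Adj u v → M u v = 0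

/-- `N` is the Moore–Penrose pseudoinverse of `A` (the four Penrose conditions). -/
def IsMoorePenrose {k : Type*} [Fintype k] (A N : Matrix k k ℝ) : Prop :=
  A * N * A = A ∧ N * A * N = N ∧ (A * N)ᵀ = A * N ∧ (N * A)ᵀ = N * A

/-- Uniqueness of the Moore–Penrose pseudoinverse. -/
lemma mp_unique {k : Type*} [Fintype k] {A N N' : Matrix k k ℝ}
    (h : IsMoorePenrose A N) (h' : IsMoorePenrose A N') : N = N' := by
  obtain ⟨h1, h2, h3, h4⟩ := h
  obtain ⟨h1', h2', h3', h4'⟩ := h'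
  have hAN : A * N = A * N' := by
    calc A * N = (A * N' * A) * N := by rw [h1']
    _ = (A * N') * (A * N) := by simp only [mul_assoc]
    _ = (A * N')ᵀ * (A * N)ᵀ := by rw [h3, h3']
    _ = ((A * N) * (A * N'))ᵀ := by rw [← transpose_mul]
    _ = ((A * N * A) * N')ᵀ := by simp only [mul_assoc]
    _ = (A * N')ᵀ := by rw [h1]
    _ = A * N' := h3'
  have hNA : N * A = N' * A := by
    calc N * A = N * (A * N' * A) := by rw [h1']
    _ = (N * A) * (N' * A) := by simp only [mul_assoc]
    _ = (N * A)ᵀ * (N' * A)ᵀ := by rw [h4, h4']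
    _ = ((N' * A) * (N * A))ᵀ := by rw [← transpose_mul]
    _ = (N' * (A * N * A))ᵀ := by simp only [mul_assoc]
    _ = (N' * A)ᵀ := by rw [h1]
    _ = N' * A := h4'
  calc N = N * A * N := h2.symm
  _ = N' * A * N := by rw [hNA]
  _ = N' * (A * N') := by rw [mul_assoc, hAN]
  _ = N' := by rw [← mul_assoc, h2']

/-- In a connected graph, if `f` vanishes somewhere and not everywhere,
there is an edge from a zero of `f` to a non-zero of `f`. -/
lemma cross_edge {V : Type*} {G : SimpleGraph V} (hconn : G.Connected) (f : V → ℝ)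
    {a b : V} (ha : f a = 0) (hb : f b ≠ 0) :
    ∃ z s, f z = 0 ∧ f s ≠ 0 ∧ G.Adj z s := by
  obtain ⟨w⟩ := hconn.preconnected a b
  clear hconn
  induction w with
  | nil => exact absurd ha hb
  | @cons u c b h p ih =>
    by_cases hc : f c = 0
    · exact ih hc hb
    · exact ⟨u, c, ha, hc, h⟩

/-- if `λ` is a simple eigenvalue of a generalized Laplacian `M₀` on a
finite connected simple graph `G`, with eigenvector `f` vanishing at some vertex, then
there is a symmetric matrix `M₁` supported on `G` such that
`(M₀ - λI)⁺ (-(M₁ f))` is nonzero at some zero of `f`. -/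
theorem stmt_12 {V : Type*} [Fintype V] [DecidableEq V] (G : SimpleGraph V)
    (hconn : G.Connected) (M₀ : Matrix V V ℝ) (hM₀ : IsGenLap G M₀)
    (lam : ℝ) (f : V → ℝ) (hf : f ≠ 0) (heig : M₀.mulVec f = lam • f)
    (hsimple : Module.finrank ℝ
      ↥(Module.End.eigenspace (Matrix.toLin' M₀) lam) = 1)
    (hzero : ∃ v, f v = 0) :
    ∃ M₁ : Matrix V V ℝ, M₁.IsSymm ∧ SupportedOn G M₁ ∧
      ∀ N : Matrix V V ℝ, IsMoorePenrose (M₀ - lam • 1) N →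
        ∃ v, f v = 0 ∧ N.mulVec (-(M₁.mulVec f)) v ≠ 0 := by
  classical
  set A : Matrix V V ℝ := M₀ - lam • 1 with hA
  -- the kernel of A is spanned by f
  have hmemE : ∀ x : V → ℝ, A *ᵥ x = 0 ↔
      x ∈ Module.End.eigenspace (Matrix.toLin' M₀) lam := by
    intro x
    rw [Module.End.mem_eigenspace_iff, Matrix.toLin'_apply, hA, sub_mulVec,
      smul_mulVec, one_mulVec, sub_eq_zero]
  have hker : ∀ x : V → ℝ, A *ᵥ x = 0 → ∃ c : ℝ, x = c • f := by
    intro x hx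
    have hfE : f ∈ Module.End.eigenspace (Matrix.toLin' M₀) lam := by
      rw [Module.End.mem_eigenspace_iff, Matrix.toLin'_apply]; exact heig
    have hne : (⟨f, hfE⟩ : Module.End.eigenspace (Matrix.toLin' M₀) lam) ≠ 0 := by
      intro h; exact hf (congrArg Subtype.val h)
    obtain ⟨c, hc⟩ := (finrank_eq_one_iff_of_nonzero' _ hne).mp hsimple
      ⟨x, (hmemE x).mp hx⟩
    exact ⟨c, (congrArg Subtype.val hc).symm⟩
  by_contra hcon
  push_neg at hcon
  -- a fixed pseudoinverse N₀
  obtain ⟨N₀, hN₀, -⟩ := hcon 0 (by simp [Matrix.IsSymm]) (by intro u v _ _; rfl)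
  -- key consequence of the negation: N₀ vanishes on Z × S
  have hNS : ∀ z s, f z = 0 → f s ≠ 0 → N₀ z s = 0 := by
    intro z s hz hs
    set M₁ : Matrix V V ℝ := Matrix.diagonal (Pi.single s (-(f s)⁻¹)) with hM₁
    obtain ⟨N, hN, hNz⟩ := hcon M₁ (Matrix.isSymm_diagonal _)
      (by intro u v huv _; exact Matrix.diagonal_apply_ne _ huv)
    have hNN : N = N₀ := mp_unique hN hN₀
    have hvec : -(M₁ *ᵥ f) = Pi.single s 1 := by
      funext v
      rw [hM₁, Pi.neg_apply, Matrix.mulVec_diagonal]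
      by_cases hv : v = s
      · subst hv
        simp [Pi.single_eq_same, inv_mul_cancel₀ hs]
      · simp [Pi.single_eq_of_ne hv]
    have := hNz z hz
    rw [hNN, hvec] at this
    simpa [Matrix.mulVec_single] using this
  -- (N₀ * A) agrees with the identity on rows indexed by zeros of f
  have hNA : ∀ v j, f v = 0 → (N₀ * A) v j = (1 : Matrix V V ℝ) v j := by
    intro v j hv
    set Q : Matrix V V ℝ := 1 - N₀ * A with hQ
    have hAQ : A * Q = 0 := by
      rw [hQ, mul_sub, mul_one, ← mul_assoc, hN₀.1, sub_self]
    have hcol : A *ᵥ (fun i => Q i j) = 0 := by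
      funext i
      have : (A * Q) i j = (0 : Matrix V V ℝ) i j := by rw [hAQ]
      simpa [Matrix.mulVec, dotProduct, Matrix.mul_apply] using this
    obtain ⟨c, hc⟩ := hker _ hcol
    have hQv : Q v j = 0 := by
      have := congrFun hc v
      simp only [Pi.smul_apply, smul_eq_mul] at this
      rw [this, hv, mul_zero]
    have := hQv
    rw [hQ] at this
    simp only [Matrix.sub_apply] at this
    linarith
  -- restrict to the zero set of f
  set Z := {v : V // f v = 0}
  set B : Matrix Z Z ℝ := fun i j => N₀ i.1 j.1 with hB
  set C : Matrix Z Z ℝ := fun i j => A i.1 j.1 with hC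
  -- splitting sums over V
  have hsplit : ∀ (v : V) (g : V → ℝ), f v = 0 →
      (∀ x, f x ≠ 0 → N₀ v x = 0) →
      ∑ x : Z, N₀ v x.1 * g x.1 = ∑ x : V, N₀ v x * g x := by
    intro v g hv hvan
    rw [← Finset.sum_filter_add_sum_filter_not Finset.univ (fun x => f x = 0)
      (fun x => N₀ v x * g x)]
    have h1 : ∑ x ∈ Finset.filter (fun x => ¬ f x = 0) Finset.univ,
        N₀ v x * g x = 0 := by
      apply Finset.sum_eq_zero
      intro x hx
      rw [hvan x (Finset.mem_filter.mp hx).2, zero_mul]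
    rw [h1, add_zero]
    exact (Finset.sum_subtype (Finset.filter (fun x => f x = 0) Finset.univ)
      (fun x => by simp) (fun x => N₀ v x * g x)).symm
  have hBC : B * C = 1 := by
    ext v z
    rw [Matrix.mul_apply, hsplit v.1 (fun x => A x z.1) v.2 (fun x hx => hNS v.1 x v.2 hx)]
    have : ∑ x : V, N₀ v.1 x * A x z.1 = (N₀ * A) v.1 z.1 := (Matrix.mul_apply).symm
    rw [this, hNA v.1 z.1 v.2]
    by_cases h : v = z
    · subst h; simp
    · have : v.1 ≠ z.1 := fun hh => h (Subtype.ext hh)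
      simp [Matrix.one_apply, h, this]
  have hCB : C * B = 1 := mul_eq_one_comm.mp hBC
  -- A vanishes on Z × S
  have hAZS : ∀ (z s : V), f z = 0 → f s ≠ 0 → A z s = 0 := by
    intro z s hz hs
    set w : Z → ℝ := fun x => A x.1 s with hw
    have hBw : B *ᵥ w = 0 := by
      funext v
      show ∑ x : Z, N₀ v.1 x.1 * A x.1 s = 0
      rw [hsplit v.1 (fun x => A x s) v.2 (fun x hx => hNS v.1 x v.2 hx)]
      have : ∑ x : V, N₀ v.1 x * A x s = (N₀ * A) v.1 s := (Matrix.mul_apply).symm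
      rw [this, hNA v.1 s v.2]
      exact Matrix.one_apply_ne (fun hh => hs (hh ▸ v.2))
    have hw0 : w = 0 := by
      have : C *ᵥ (B *ᵥ w) = w := by rw [Matrix.mulVec_mulVec, hCB, one_mulVec]
      rw [hBw, Matrix.mulVec_zero] at this
      exact this.symm
    exact congrFun hw0 ⟨z, hz⟩
  -- but connectivity gives a crossing edge, contradiction
  obtain ⟨z₀, hz₀⟩ := hzero
  obtain ⟨s₀, hs₀⟩ := Function.ne_iff.mp hf
  obtain ⟨z, s, hz, hs, hadj⟩ := cross_edge hconn f hz₀ hs₀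
  have hAzs : A z s = 0 := hAZS z s hz hs
  have hzs : z ≠ s := G.ne_of_adj hadj
  have hAM : A z s = M₀ z s := by
    rw [hA]
    simp [Matrix.sub_apply, Matrix.smul_apply, Matrix.one_apply_ne hzs]
  have := hM₀.2.1 z s hadj
  linarith [hAzs, hAM]
end

section
/- Let G be a finite simple graph, M₀ a generalized Laplacian, λ an eigenvalue with eigenvector f. If v is a deep Urschel vertex of f (i.e., f(v) = 0 and f(u) = 0 for every neighbour u of v), then for every symmetric matrix M₁ supported on G we have (M₁ f)(v) = 0. Consequently, the subspace W = {M₁ f : M₁ symmetric, supported on G} ⊆ ℝ^{V_G} equals the span of the standard basis vectors e_v for v ranging over the non-Urschel vertices of f and the shallow Urschel vertices of f. -/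
open Matrix

private lemma transpose_stdBasisMatrix' {V : Type*} [DecidableEq V] (i j : V) (c : ℝ) :
    (Matrix.single i j c)ᵀ = Matrix.single j i c := by
  ext a b
  simp only [Matrix.transpose_apply, Matrix.single, Matrix.of_apply, and_comm]

private lemma stdBasisMatrix_apply_ne' {V : Type*} [DecidableEq V] (i j a b : V) (c : ℝ)
    (h : ¬(i = a ∧ j = b)) : Matrix.single i j c a b = 0 := by
  simp only [Matrix.single, Matrix.of_apply, if_neg h]

/-- if `v` is a deep Urschel vertex of the eigenvector `f` (i.e. `f` and
all its neighbours vanish at `v`), then `(M₁ f) v = 0` for every symmetric `M₁`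
supported on `G`; consequently the subspace `{M₁ f}` equals the span of the standard
basis vectors at the non-Urschel and shallow Urschel vertices of `f`. -/
theorem stmt_13 {V : Type*} [Fintype V] [DecidableEq V] (G : SimpleGraph V)
    (M₀ : Matrix V V ℝ) (hM₀ : IsGenLap G M₀) (lam : ℝ) (f : V → ℝ) (hf : f ≠ 0)
    (heig : M₀.mulVec f = lam • f) :
    (∀ v, f v = 0 → (∀ u, G.Adj u v → f u = 0) →
      ∀ M₁ : Matrix V V ℝ, M₁.IsSymm → SupportedOn G M₁ → M₁.mulVec f v = 0) ∧
    {x : V → ℝ | ∃ M₁ : Matrix V V ℝ, M₁.IsSymm ∧ SupportedOn G M₁ ∧ x = M₁.mulVec f}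
      = ↑(Submodule.span ℝ ((fun v => (Pi.single v 1 : V → ℝ)) ''
          {v | f v ≠ 0 ∨ (f v = 0 ∧ ∃ u, G.Adj v u ∧ f u ≠ 0)})) := by
  have h1 : ∀ v, f v = 0 → (∀ u, G.Adj u v → f u = 0) →
      ∀ M₁ : Matrix V V ℝ, M₁.IsSymm → SupportedOn G M₁ → M₁.mulVec f v = 0 := by
    intro v hv hnb M₁ _ hsupp
    simp only [Matrix.mulVec, dotProduct]
    apply Finset.sum_eq_zero
    intro u _
    by_cases h : u = v
    · subst h; simp [hv]
    · by_cases hadj : G.Adj v u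
      · rw [hnb u (G.adj_symm hadj), mul_zero]
      · show M₁ v u * f u = 0; rw [hsupp v u (Ne.symm h) hadj, zero_mul]
  refine ⟨h1, ?_⟩
  set S : Set V := {v | f v ≠ 0 ∨ (f v = 0 ∧ ∃ u, G.Adj v u ∧ f u ≠ 0)} with hS
  apply Set.Subset.antisymm
  · rintro x ⟨M₁, hsym, hsupp, rfl⟩
    have hx0 : ∀ v, v ∉ S → M₁.mulVec f v = 0 := by
      intro v hv
      simp only [hS, Set.mem_setOf_eq, not_or, not_and, not_exists] at hv
      rcases hv with ⟨hv1, hv2⟩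
      push_neg at hv1
      have hnb : ∀ u, G.Adj u v → f u = 0 := by
        intro u hadj
        by_contra h
        exact absurd (hv2 hv1) (by push_neg; exact ⟨u, G.adj_symm hadj, h⟩)
      exact h1 v hv1 hnb M₁ hsym hsupp
    have hrep : M₁.mulVec f = ∑ v : V, M₁.mulVec f v • (Pi.single v 1 : V → ℝ) := by
      funext w
      simp [Pi.single_apply, Finset.sum_ite_eq]
    rw [hrep]
    apply Submodule.sum_mem
    intro v _
    by_cases hv : v ∈ S
    · exact Submodule.smul_mem _ _ (Submodule.subset_span ⟨v, hv, rfl⟩)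
    · rw [hx0 v hv, zero_smul]; exact Submodule.zero_mem _
  · set W : Submodule ℝ (V → ℝ) :=
      { carrier := {x : V → ℝ | ∃ M₁ : Matrix V V ℝ, M₁.IsSymm ∧ SupportedOn G M₁ ∧
          x = M₁.mulVec f}
        zero_mem' := ⟨0, Matrix.isSymm_zero, fun _ _ _ _ => rfl, by
          simp [Matrix.zero_mulVec]⟩
        add_mem' := by
          rintro a b ⟨M, hM, hMs, rfl⟩ ⟨N, hN, hNs, rfl⟩
          exact ⟨M + N, hM.add hN, fun u v h h' => by
            simp [Matrix.add_apply, hMs u v h h', hNs u v h h'],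
            (Matrix.add_mulVec M N f).symm⟩
        smul_mem' := by
          rintro c a ⟨M, hM, hMs, rfl⟩
          refine ⟨c • M, ?_, fun u v h h' => by simp [hMs u v h h'], ?_⟩
          · unfold Matrix.IsSymm
            rw [Matrix.transpose_smul, hM]
          · rw [Matrix.smul_mulVec] } with hW
    have : Submodule.span ℝ ((fun v => (Pi.single v 1 : V → ℝ)) '' S) ≤ W := by
      apply Submodule.span_le.mpr
      rintro x ⟨v, hv, rfl⟩
      rcases hv with hv | ⟨hv0, u, hadj, hu⟩
      · refine ⟨Matrix.diagonal (Pi.single v (f v)⁻¹), Matrix.isSymm_diagonal _,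
          fun a b h _ => Matrix.diagonal_apply_ne _ h, ?_⟩
        funext w
        rw [Matrix.mulVec_diagonal]
        rcases eq_or_ne w v with rfl | hw
        · simp [inv_mul_cancel₀ hv]
        · simp [Pi.single_apply, hw]
      · have hvu : v ≠ u := G.ne_of_adj hadj
        refine ⟨Matrix.single v u (f u)⁻¹ + Matrix.single u v (f u)⁻¹,
          ?_, ?_, ?_⟩
        · unfold Matrix.IsSymm
          rw [Matrix.transpose_add, transpose_stdBasisMatrix', transpose_stdBasisMatrix',
            add_comm]
        · intro a b h h'
          have hna : ¬(v = a ∧ u = b) := by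
            rintro ⟨rfl, rfl⟩; exact h' hadj
          have hnb : ¬(u = a ∧ v = b) := by
            rintro ⟨rfl, rfl⟩; exact h' (G.adj_symm hadj)
          rw [Matrix.add_apply, stdBasisMatrix_apply_ne' _ _ _ _ _ hna,
            stdBasisMatrix_apply_ne' _ _ _ _ _ hnb, add_zero]
        · rw [Matrix.add_mulVec, Matrix.single_mulVec,
            Matrix.single_mulVec]
          funext w
          rcases eq_or_ne w v with rfl | hw
          · simp [Function.update_apply, hvu, inv_mul_cancel₀ hu]
          · rcases eq_or_ne w u with rfl | hw'
            · simp [Function.update_apply, hvu.symm, hv0, Pi.single_apply, hw]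
            · simp [Function.update_apply, hw, hw', Pi.single_apply]
    intro x hx
    exact this hx
end
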